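/- arXiv:1511.04516 — 7 statements merged into one kernel-verified Lean document; each statement's English description precedes it below -/
import Mathlib

section
/- Let M be an n×n complex Hermitian matrix, N an m×n complex matrix, and S an m×m unitary matrix. Let N = V N̂ W† be a singular value decomposition of N, where V is m×m unitary, W is n×n unitary, and N̂ is the m×n matrix with block form N̂ = [[N̄, 0],[0, 0]] where N̄ = diag(√κ₁, …, √κ_r) with κ_i > 0 and r = rank N. Then for every s ∈ ℂ such that s·I_n + i·M + (1/2)·N†N is invertible, the matrix s·I_n + i·(W†MW) + (1/2)·N̂†N̂ is also invertible, and the transfer function factorizes as [I_m − N·(s·I_n + i·M + (1/2)·N†N)^{-1}·N†]·S = V·[I_m − N̂·(s·I_n + i·(W†MW) + (1/2)·N̂†N̂)^{-1}·N̂†]·(V†S). -/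
open Matrix

/-- Factorization of the transfer function of a passive linear quantum
stochastic system via the SVD of the coupling matrix.  The rows of `N` are
indexed by `Fin r ⊕ Fin m'` (so `m = r + m'`) and its columns by
`Fin r ⊕ Fin n'` (so `n = r + n'`), where `r = rank N`.  Given the SVD
`N = V N̂ W†` with `N̂ = [[diag(√κᵢ), 0],[0, 0]]`, for every `s` for which
`sI + iM + (1/2)N†N` is invertible, `sI + i(W†MW) + (1/2)N̂†N̂` is invertible
and the transfer function factorizes as
`[I − N(sI + iM + N†N/2)⁻¹N†]S = V[I − N̂(sI + i W†MW + N̂†N̂/2)⁻¹N̂†](V†S)`. -/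
theorem passive_transfer_function_factorization (r m' n' : ℕ)
    (M : Matrix (Fin r ⊕ Fin n') (Fin r ⊕ Fin n') ℂ) (hM : M.IsHermitian)
    (N : Matrix (Fin r ⊕ Fin m') (Fin r ⊕ Fin n') ℂ)
    (S : Matrix (Fin r ⊕ Fin m') (Fin r ⊕ Fin m') ℂ)
    (hS : S ∈ Matrix.unitaryGroup (Fin r ⊕ Fin m') ℂ)
    (V : Matrix (Fin r ⊕ Fin m') (Fin r ⊕ Fin m') ℂ)
    (hV : V ∈ Matrix.unitaryGroup (Fin r ⊕ Fin m') ℂ)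
    (W : Matrix (Fin r ⊕ Fin n') (Fin r ⊕ Fin n') ℂ)
    (hW : W ∈ Matrix.unitaryGroup (Fin r ⊕ Fin n') ℂ)
    (κ : Fin r → ℝ) (hκ : ∀ i, 0 < κ i)
    (Nh : Matrix (Fin r ⊕ Fin m') (Fin r ⊕ Fin n') ℂ)
    (hNh : Nh = Matrix.fromBlocks (Matrix.diagonal fun i => (Real.sqrt (κ i) : ℂ)) 0 0 0)
    (hrank : N.rank = r)
    (hSVD : N = V * Nh * Wᴴ) :
    ∀ s : ℂ,
      IsUnit (s • (1 : Matrix (Fin r ⊕ Fin n') (Fin r ⊕ Fin n') ℂ)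
          + Complex.I • M + (1 / 2 : ℂ) • (Nᴴ * N)) →
      IsUnit (s • (1 : Matrix (Fin r ⊕ Fin n') (Fin r ⊕ Fin n') ℂ)
          + Complex.I • (Wᴴ * M * W) + (1 / 2 : ℂ) • (Nhᴴ * Nh)) ∧
      (1 - N * (s • (1 : Matrix (Fin r ⊕ Fin n') (Fin r ⊕ Fin n') ℂ)
            + Complex.I • M + (1 / 2 : ℂ) • (Nᴴ * N))⁻¹ * Nᴴ) * S
        = V * (1 - Nh * (s • (1 : Matrix (Fin r ⊕ Fin n') (Fin r ⊕ Fin n') ℂ)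
            + Complex.I • (Wᴴ * M * W) + (1 / 2 : ℂ) • (Nhᴴ * Nh))⁻¹ * Nhᴴ) * (Vᴴ * S) := by
  intro s hA
  have hWW : Wᴴ * W = 1 := by
    simpa [Matrix.star_eq_conjTranspose] using hW.1
  have hWW' : W * Wᴴ = 1 := by
    simpa [Matrix.star_eq_conjTranspose] using hW.2
  have hVV : Vᴴ * V = 1 := by
    simpa [Matrix.star_eq_conjTranspose] using hV.1
  have hVV' : V * Vᴴ = 1 := by
    simpa [Matrix.star_eq_conjTranspose] using hV.2
  have hWW1 : ∀ X : Matrix (Fin r ⊕ Fin n') (Fin r ⊕ Fin n') ℂ, Wᴴ * (W * X) = X := by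
    intro X; rw [← Matrix.mul_assoc, hWW, Matrix.one_mul]
  have hWW2 : ∀ X : Matrix (Fin r ⊕ Fin n') (Fin r ⊕ Fin n') ℂ, W * (Wᴴ * X) = X := by
    intro X; rw [← Matrix.mul_assoc, hWW', Matrix.one_mul]
  have hVV1 : ∀ X : Matrix (Fin r ⊕ Fin m') (Fin r ⊕ Fin n') ℂ, Vᴴ * (V * X) = X := by
    intro X; rw [← Matrix.mul_assoc, hVV, Matrix.one_mul]
  set A := s • (1 : Matrix (Fin r ⊕ Fin n') (Fin r ⊕ Fin n') ℂ)
      + Complex.I • M + (1 / 2 : ℂ) • (Nᴴ * N) with hAdef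
  have hNN : Nᴴ * N = W * (Nhᴴ * Nh) * Wᴴ := by
    rw [hSVD]
    simp only [Matrix.conjTranspose_mul, Matrix.conjTranspose_conjTranspose,
      Matrix.mul_assoc, hVV1]
  have hB : s • (1 : Matrix (Fin r ⊕ Fin n') (Fin r ⊕ Fin n') ℂ)
      + Complex.I • (Wᴴ * M * W) + (1 / 2 : ℂ) • (Nhᴴ * Nh) = Wᴴ * A * W := by
    rw [hAdef, hNN]
    rw [Matrix.mul_add, Matrix.mul_add, Matrix.add_mul, Matrix.add_mul]
    congr 1
    · congr 1
      · rw [Matrix.mul_smul, Matrix.smul_mul, Matrix.mul_one, hWW]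
      · rw [Matrix.mul_smul, Matrix.smul_mul]
    · rw [Matrix.mul_smul, Matrix.smul_mul]
      congr 1
      simp only [Matrix.mul_assoc]
      rw [hWW, Matrix.mul_one, hWW1]
  have hWu : IsUnit W := ⟨⟨W, Wᴴ, hWW', hWW⟩, rfl⟩
  have hWu' : IsUnit Wᴴ := ⟨⟨Wᴴ, W, hWW, hWW'⟩, rfl⟩
  have hBu : IsUnit (Wᴴ * A * W) := (hWu'.mul hA).mul hWu
  refine ⟨hB ▸ hBu, ?_⟩
  have hWinv : (Wᴴ)⁻¹ = W := Matrix.inv_eq_left_inv hWW'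
  have hWinv' : W⁻¹ = Wᴴ := Matrix.inv_eq_left_inv hWW
  have hBinv : (Wᴴ * A * W)⁻¹ = Wᴴ * A⁻¹ * W := by
    rw [Matrix.mul_inv_rev, Matrix.mul_inv_rev, hWinv, hWinv', Matrix.mul_assoc]
  rw [hB, hBinv, hSVD]
  simp only [Matrix.conjTranspose_mul, Matrix.conjTranspose_conjTranspose]
  rw [Matrix.sub_mul, Matrix.mul_sub, Matrix.sub_mul, Matrix.one_mul]
  congr 1
  · rw [Matrix.mul_one, ← Matrix.mul_assoc, hVV', Matrix.one_mul]
  · simp only [Matrix.mul_assoc]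
end

section
/- Let M and M̄ be 2n×2n complex matrices that are both Hermitian and doubled-up, and let Ñ = diag(√κ̃₁, …, √κ̃_n, √κ̃₁, …, √κ̃_n) with κ̃_i > 0. Define X = 2i·(Ñ^♭)^{-1}·(J_{2n}M̄ − J_{2n}M)·Ñ^{-1}. Then: (i) X is doubled-up and ♭-skew-Hermitian (X^♭ = −X), and it is the unique 2n×2n complex matrix satisfying J_{2n}M̄ = J_{2n}M − (i/2)·Ñ^♭XÑ; (ii) if in addition I + X is invertible, then R := (X − I)(X + I)^{-1} is a Bogoliubov matrix, I − R is invertible, (I + R)(I − R)^{-1} = X, and R is the unique Bogoliubov matrix without eigenvalue 1 with this property; (iii) consequently, for any 2m×2n doubled-up matrix N, the modified drift matrix −i·J_{2n}M − (1/2)·Ñ^♭Ñ − (1/2)·N^♭N − Ñ^♭·R(I − R)^{-1}·Ñ equals the drift matrix −i·J_{2n}M̄ − (1/2)·N^♭N of a linear quantum stochastic system with Hamiltonian matrix M̄. -/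
open Matrix

noncomputable section

/-- The Krein-space metric `J_{2k} = diag(I_k, -I_k)`. -/
def Jmat (k : ℕ) : Matrix (Fin k ⊕ Fin k) (Fin k ⊕ Fin k) ℂ :=
  Matrix.fromBlocks 1 0 0 (-1)

/-- The block-swap matrix `Σ_{2k} = [[0, I_k],[I_k, 0]]`. -/
def Sig (k : ℕ) : Matrix (Fin k ⊕ Fin k) (Fin k ⊕ Fin k) ℂ :=
  Matrix.fromBlocks 0 1 1 0

/-- A `2r × 2s` complex matrix is doubled-up if `Σ_{2r} X Σ_{2s} = X^#`. -/
def DoubledUp {r s : ℕ} (X : Matrix (Fin r ⊕ Fin r) (Fin s ⊕ Fin s) ℂ) : Prop :=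
  Sig r * X * Sig s = X.map (starRingEnd ℂ)

/-- The ♭-adjoint `X^♭ = J_{2s} X† J_{2r}` of a `2r × 2s` complex matrix. -/
def flatAdj {r s : ℕ} (X : Matrix (Fin r ⊕ Fin r) (Fin s ⊕ Fin s) ℂ) :
    Matrix (Fin s ⊕ Fin s) (Fin r ⊕ Fin r) ℂ :=
  Jmat s * Xᴴ * Jmat r

/-- A `2k × 2k` complex matrix is Bogoliubov if it is doubled-up and ♭-unitary. -/
def Bogoliubov {k : ℕ} (R : Matrix (Fin k ⊕ Fin k) (Fin k ⊕ Fin k) ℂ) : Prop :=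
  DoubledUp R ∧ R * flatAdj R = 1 ∧ flatAdj R * R = 1

-- helper lemmas
lemma Jmat_mul_Jmat (k : ℕ) : Jmat k * Jmat k = 1 := by
  simp [Jmat, Matrix.fromBlocks_multiply, ← Matrix.fromBlocks_one]

lemma Sig_mul_Sig (k : ℕ) : Sig k * Sig k = 1 := by
  simp [Sig, Matrix.fromBlocks_multiply, ← Matrix.fromBlocks_one]

lemma Jmat_mul_Jmat_mul {k r : ℕ} (C : Matrix (Fin k ⊕ Fin k) (Fin r ⊕ Fin r) ℂ) :
    Jmat k * (Jmat k * C) = C := by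
  rw [← Matrix.mul_assoc, Jmat_mul_Jmat, Matrix.one_mul]

lemma Sig_mul_Sig_mul {k r : ℕ} (C : Matrix (Fin k ⊕ Fin k) (Fin r ⊕ Fin r) ℂ) :
    Sig k * (Sig k * C) = C := by
  rw [← Matrix.mul_assoc, Sig_mul_Sig, Matrix.one_mul]

lemma Jmat_ct (k : ℕ) : (Jmat k)ᴴ = Jmat k := by
  simp [Jmat, Matrix.fromBlocks_conjTranspose]

lemma Jmat_inv (k : ℕ) : (Jmat k)⁻¹ = Jmat k := Matrix.inv_eq_right_inv (Jmat_mul_Jmat k)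

lemma Sig_inv (k : ℕ) : (Sig k)⁻¹ = Sig k := Matrix.inv_eq_right_inv (Sig_mul_Sig k)

lemma isUnit_Jmat (k : ℕ) : IsUnit (Jmat k) :=
  (Matrix.isUnit_iff_isUnit_det _).mpr (Matrix.isUnit_det_of_right_inverse (Jmat_mul_Jmat k))

lemma hSJS (k : ℕ) : Sig k * Jmat k * Sig k = -Jmat k := by
  simp [Jmat, Sig, Matrix.fromBlocks_multiply, Matrix.fromBlocks_neg]

lemma flatAdj_mul {r s t : ℕ} (A : Matrix (Fin r ⊕ Fin r) (Fin s ⊕ Fin s) ℂ)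
    (B : Matrix (Fin s ⊕ Fin s) (Fin t ⊕ Fin t) ℂ) :
    flatAdj (A * B) = flatAdj B * flatAdj A := by
  simp only [flatAdj, Matrix.conjTranspose_mul, Matrix.mul_assoc, Jmat_mul_Jmat_mul]

lemma flatAdj_one {k : ℕ} : flatAdj (1 : Matrix (Fin k ⊕ Fin k) (Fin k ⊕ Fin k) ℂ) = 1 := by
  simp [flatAdj, Jmat_mul_Jmat]

lemma flatAdj_add {r s : ℕ} (A B : Matrix (Fin r ⊕ Fin r) (Fin s ⊕ Fin s) ℂ) :
    flatAdj (A + B) = flatAdj A + flatAdj B := by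
  simp [flatAdj, Matrix.conjTranspose_add, Matrix.add_mul, Matrix.mul_add]

lemma flatAdj_sub {r s : ℕ} (A B : Matrix (Fin r ⊕ Fin r) (Fin s ⊕ Fin s) ℂ) :
    flatAdj (A - B) = flatAdj A - flatAdj B := by
  simp [flatAdj, Matrix.conjTranspose_sub, Matrix.sub_mul, Matrix.mul_sub]

lemma flatAdj_smul {r s : ℕ} (c : ℂ) (A : Matrix (Fin r ⊕ Fin r) (Fin s ⊕ Fin s) ℂ) :
    flatAdj (c • A) = (starRingEnd ℂ c) • flatAdj A := by
  simp [flatAdj, Matrix.conjTranspose_smul, Matrix.smul_mul, Matrix.mul_smul]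

lemma flatAdj_inv {k : ℕ} (A : Matrix (Fin k ⊕ Fin k) (Fin k ⊕ Fin k) ℂ) :
    flatAdj A⁻¹ = (flatAdj A)⁻¹ := by
  rw [flatAdj, flatAdj, Matrix.conjTranspose_nonsing_inv, Matrix.mul_inv_rev, Matrix.mul_inv_rev,
    Jmat_inv, Matrix.mul_assoc]

lemma isUnit_flatAdj {k : ℕ} {A : Matrix (Fin k ⊕ Fin k) (Fin k ⊕ Fin k) ℂ}
    (h : IsUnit A) : IsUnit (flatAdj A) :=
  ((isUnit_Jmat k).mul ((Matrix.isUnit_conjTranspose A).mpr h)).mul (isUnit_Jmat k)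

lemma mapc_one {k : ℕ} : (1 : Matrix (Fin k ⊕ Fin k) (Fin k ⊕ Fin k) ℂ).map (starRingEnd ℂ) = 1 := by
  ext i j; by_cases h : i = j <;> simp [Matrix.one_apply, h]

lemma mapc_sub {r s : ℕ} (A B : Matrix (Fin r ⊕ Fin r) (Fin s ⊕ Fin s) ℂ) :
    (A - B).map (starRingEnd ℂ) = A.map (starRingEnd ℂ) - B.map (starRingEnd ℂ) := by
  ext i j; simp

lemma mapc_add {r s : ℕ} (A B : Matrix (Fin r ⊕ Fin r) (Fin s ⊕ Fin s) ℂ) :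
    (A + B).map (starRingEnd ℂ) = A.map (starRingEnd ℂ) + B.map (starRingEnd ℂ) := by
  ext i j; simp

lemma mapc_smul {r s : ℕ} (c : ℂ) (A : Matrix (Fin r ⊕ Fin r) (Fin s ⊕ Fin s) ℂ) :
    (c • A).map (starRingEnd ℂ) = (starRingEnd ℂ c) • A.map (starRingEnd ℂ) := by
  ext i j; simp

lemma mapc_mul {r s t : ℕ} (A : Matrix (Fin r ⊕ Fin r) (Fin s ⊕ Fin s) ℂ)
    (B : Matrix (Fin s ⊕ Fin s) (Fin t ⊕ Fin t) ℂ) :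
    (A * B).map (starRingEnd ℂ) = A.map (starRingEnd ℂ) * B.map (starRingEnd ℂ) :=
  Matrix.map_mul

lemma Jmat_map (k : ℕ) : (Jmat k).map (starRingEnd ℂ) = Jmat k := by
  ext i j
  rcases i with i|i <;> rcases j with j|j <;>
    first
    | (by_cases h : i = j <;> simp [Jmat, Matrix.one_apply, h])
    | simp [Jmat]

/-- Feedback modification of the Hamiltonian of a general linear quantum
stochastic system.  With `Mb = M̄`, `Nt = Ñ = diag(√κ̃, √κ̃)` and
`X = 2i (Ñ^♭)⁻¹ (J M̄ − J M) Ñ⁻¹`: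
(i) `X` is doubled-up, ♭-skew-Hermitian, and is the unique solution of
`J M̄ = J M − (i/2) Ñ^♭ X Ñ`;
(ii) if `I + X` is invertible then `R = (X − I)(X + I)⁻¹` is Bogoliubov,
`I − R` is invertible, `(I + R)(I − R)⁻¹ = X`, and `R` is the unique such
Bogoliubov matrix without eigenvalue `1`;
(iii) the modified drift matrix equals the drift matrix with Hamiltonian `M̄`. -/
theorem feedback_hamiltonian_general (n m : ℕ)
    (M Mb : Matrix (Fin n ⊕ Fin n) (Fin n ⊕ Fin n) ℂ)
    (hM : M.IsHermitian) (hMdu : DoubledUp M)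
    (hMb : Mb.IsHermitian) (hMbdu : DoubledUp Mb)
    (κ : Fin n → ℝ) (hκ : ∀ i, 0 < κ i)
    (Nt : Matrix (Fin n ⊕ Fin n) (Fin n ⊕ Fin n) ℂ)
    (hNt : Nt = Matrix.diagonal (Sum.elim (fun i => (Real.sqrt (κ i) : ℂ))
      (fun i => (Real.sqrt (κ i) : ℂ))))
    (X : Matrix (Fin n ⊕ Fin n) (Fin n ⊕ Fin n) ℂ)
    (hX : X = (2 * Complex.I) • ((flatAdj Nt)⁻¹ * (Jmat n * Mb - Jmat n * M) * Nt⁻¹)) :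
    -- (i)
    DoubledUp X ∧ flatAdj X = -X ∧
    Jmat n * Mb = Jmat n * M - (Complex.I / 2) • (flatAdj Nt * X * Nt) ∧
    (∀ X' : Matrix (Fin n ⊕ Fin n) (Fin n ⊕ Fin n) ℂ,
      Jmat n * Mb = Jmat n * M - (Complex.I / 2) • (flatAdj Nt * X' * Nt) → X' = X) ∧
    -- (ii) and (iii)
    (IsUnit ((1 : Matrix (Fin n ⊕ Fin n) (Fin n ⊕ Fin n) ℂ) + X) →
      Bogoliubov ((X - 1) * (X + 1)⁻¹) ∧
      IsUnit ((1 : Matrix (Fin n ⊕ Fin n) (Fin n ⊕ Fin n) ℂ) - (X - 1) * (X + 1)⁻¹) ∧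
      (1 + (X - 1) * (X + 1)⁻¹) * (1 - (X - 1) * (X + 1)⁻¹)⁻¹ = X ∧
      (∀ R' : Matrix (Fin n ⊕ Fin n) (Fin n ⊕ Fin n) ℂ, Bogoliubov R' →
        IsUnit ((1 : Matrix (Fin n ⊕ Fin n) (Fin n ⊕ Fin n) ℂ) - R') →
        (1 + R') * (1 - R')⁻¹ = X → R' = (X - 1) * (X + 1)⁻¹) ∧
      (∀ N : Matrix (Fin m ⊕ Fin m) (Fin n ⊕ Fin n) ℂ, DoubledUp N →
        (-Complex.I) • (Jmat n * M) - (1 / 2 : ℂ) • (flatAdj Nt * Nt)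
            - (1 / 2 : ℂ) • (flatAdj N * N)
            - flatAdj Nt * (((X - 1) * (X + 1)⁻¹)
                * (1 - (X - 1) * (X + 1)⁻¹)⁻¹) * Nt
          = (-Complex.I) • (Jmat n * Mb) - (1 / 2 : ℂ) • (flatAdj N * N))) := by
  have c := starRingEnd ℂ
  -- block representation of Nt
  set D : Matrix (Fin n) (Fin n) ℂ := Matrix.diagonal (fun i => (Real.sqrt (κ i) : ℂ)) with hD
  have hNtB : Nt = Matrix.fromBlocks D 0 0 D := by
    rw [hNt, hD, Matrix.fromBlocks_diagonal]
  -- invertibility of Nt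
  have hNinv1 : Nt * Matrix.diagonal (Sum.elim (fun i => (Real.sqrt (κ i) : ℂ))
      (fun i => (Real.sqrt (κ i) : ℂ)))⁻¹ = 1 := by
    have hne : ∀ j : Fin n, ((Real.sqrt (κ j) : ℂ)) ≠ 0 := fun j =>
      Complex.ofReal_ne_zero.mpr (Real.sqrt_pos.mpr (hκ j)).ne'
    rw [hNt, Matrix.diagonal_mul_diagonal, ← Matrix.diagonal_one]
    exact congrArg Matrix.diagonal (funext fun i => by
      rcases i with i|i <;>
        simp only [Pi.mul_apply, Pi.inv_apply, Pi.one_apply, Sum.elim_inl, Sum.elim_inr] <;>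
        exact mul_inv_cancel₀ (hne _))
  have hNtU : IsUnit Nt :=
    (Matrix.isUnit_iff_isUnit_det _).mpr (Matrix.isUnit_det_of_right_inverse hNinv1)
  have hdet := (Matrix.isUnit_iff_isUnit_det _).mp hNtU
  have hNr : Nt * Nt⁻¹ = 1 := Matrix.mul_nonsing_inv _ hdet
  have hNl : Nt⁻¹ * Nt = 1 := Matrix.nonsing_inv_mul _ hdet
  -- basic symmetry facts for Nt
  have hDct : Dᴴ = D := by
    rw [hD, Matrix.diagonal_conjTranspose]
    exact congrArg Matrix.diagonal (funext fun i => by simp)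
  have hNct : Ntᴴ = Nt := by
    rw [hNtB, Matrix.fromBlocks_conjTranspose]
    simp [hDct]
  have hJN : Jmat n * Nt = Nt * Jmat n := by
    rw [hNtB, Jmat]
    simp [Matrix.fromBlocks_multiply]
  have hflatNt : flatAdj Nt = Nt := by
    rw [flatAdj, hNct, hJN, Matrix.mul_assoc, Jmat_mul_Jmat, Matrix.mul_one]
  have hSNS : Sig n * Nt * Sig n = Nt := by
    rw [hNtB, Sig]
    simp [Matrix.fromBlocks_multiply]
  have hNmap : Nt.map (starRingEnd ℂ) = Nt := by
    rw [hNt, Matrix.diagonal_map (map_zero _)]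
    exact congrArg Matrix.diagonal (funext fun i => by
      rcases i with i|i <;> simp [Complex.conj_ofReal])
  -- derived facts for Nt⁻¹
  have hNimap : (Nt⁻¹).map (starRingEnd ℂ) = Nt⁻¹ := by
    have h1 : Nt * (Nt⁻¹).map (starRingEnd ℂ) = 1 := by
      nth_rewrite 1 [← hNmap]
      rw [← mapc_mul, hNr, mapc_one]
    exact (Matrix.inv_eq_right_inv h1).symm
  have hSNiS : Sig n * Nt⁻¹ * Sig n = Nt⁻¹ := by
    have h1 : (Sig n * Nt * Sig n)⁻¹ = Nt⁻¹ := by rw [hSNS]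
    rw [Matrix.mul_inv_rev, Matrix.mul_inv_rev, Sig_inv] at h1
    rw [Matrix.mul_assoc]
    exact h1
  have hflatNi : flatAdj Nt⁻¹ = Nt⁻¹ := by rw [flatAdj_inv, hflatNt]
  -- the difference of Hamiltonian drifts
  set D0 : Matrix (Fin n ⊕ Fin n) (Fin n ⊕ Fin n) ℂ := Jmat n * Mb - Jmat n * M with hD0
  have hX' : X = (2 * Complex.I) • (Nt⁻¹ * D0 * Nt⁻¹) := by rw [hX, hflatNt, hD0]
  have sandwich : ∀ A : Matrix (Fin n ⊕ Fin n) (Fin n ⊕ Fin n) ℂ,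
      Nt⁻¹ * (Nt * A * Nt) * Nt⁻¹ = A := by
    intro A
    simp only [← Matrix.mul_assoc]
    rw [hNl, Matrix.one_mul, Matrix.mul_assoc, hNr, Matrix.mul_one]
  have hNXN : Nt * X * Nt = (2 * Complex.I) • D0 := by
    rw [hX', Matrix.mul_smul, Matrix.smul_mul]
    congr 1
    simp only [← Matrix.mul_assoc]
    rw [hNr, Matrix.one_mul, Matrix.mul_assoc, hNl, Matrix.mul_one]
  -- ♭-adjoint of J * C for Hermitian C
  have hfJM : ∀ C : Matrix (Fin n ⊕ Fin n) (Fin n ⊕ Fin n) ℂ, C.IsHermitian →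
      flatAdj (Jmat n * C) = Jmat n * C := by
    intro C hC
    rw [flatAdj, Matrix.conjTranspose_mul, Jmat_ct, hC.eq, Matrix.mul_assoc, Matrix.mul_assoc,
      Jmat_mul_Jmat, Matrix.mul_one]
  have hfD0 : flatAdj D0 = D0 := by
    rw [hD0, flatAdj_sub, hfJM M hM, hfJM Mb hMb]
  -- (i-b) flatAdj X = -X
  have hstar2I : (starRingEnd ℂ) (2 * Complex.I) = -(2 * Complex.I) := by
    simp [Complex.ext_iff]
  have hflatX : flatAdj X = -X := by
    rw [hX', flatAdj_smul, flatAdj_mul, flatAdj_mul, hflatNi, hfD0]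
    rw [hstar2I, neg_smul, Matrix.mul_assoc]
  -- (i-a) DoubledUp X
  have hSprod : ∀ {r' : ℕ} (A : Matrix (Fin n ⊕ Fin n) (Fin n ⊕ Fin n) ℂ)
      (B : Matrix (Fin n ⊕ Fin n) (Fin r' ⊕ Fin r') ℂ),
      Sig n * (A * B) * Sig r' = (Sig n * A * Sig n) * (Sig n * B * Sig r') := by
    intro r' A B
    simp only [Matrix.mul_assoc, Sig_mul_Sig_mul]
  have hSD0S : Sig n * D0 * Sig n = -(D0.map (starRingEnd ℂ)) := by
    have hJC : ∀ C : Matrix (Fin n ⊕ Fin n) (Fin n ⊕ Fin n) ℂ, DoubledUp C →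
        Sig n * (Jmat n * C) * Sig n = -((Jmat n * C).map (starRingEnd ℂ)) := by
      intro C hC
      rw [hSprod, hSJS, hC, mapc_mul, Jmat_map, Matrix.neg_mul]
    rw [hD0, Matrix.mul_sub, Matrix.sub_mul, hJC M hMdu, hJC Mb hMbdu, mapc_sub]
    abel
  have hduX : DoubledUp X := by
    rw [DoubledUp, hX', Matrix.mul_smul, Matrix.smul_mul, mapc_smul]
    rw [hstar2I, hSprod, hSprod, hSNiS, hSD0S]
    simp only [mapc_mul, hNimap, Matrix.mul_neg, Matrix.neg_mul, smul_neg, neg_smul]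
  have hduX' : Sig n * X * Sig n = X.map (starRingEnd ℂ) := hduX
  -- (i-c) the equation
  have heq : Jmat n * Mb = Jmat n * M - (Complex.I / 2) • (flatAdj Nt * X * Nt) := by
    rw [hflatNt, hNXN, smul_smul]
    rw [show Complex.I / 2 * (2 * Complex.I) = -1 by
      have h := Complex.I_mul_I
      field_simp
      linear_combination h]
    rw [neg_one_smul, hD0]
    abel
  refine ⟨hduX, hflatX, heq, ?_, ?_⟩
  · -- uniqueness of X
    intro X' h'
    have h2 : (Complex.I / 2) • (flatAdj Nt * X' * Nt)
        = (Complex.I / 2) • (flatAdj Nt * X * Nt) :=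
      sub_right_inj.mp (h'.symm.trans heq)
    have hc0 : (Complex.I / 2 : ℂ) ≠ 0 := by
      simp [div_eq_zero_iff, Complex.I_ne_zero]
    have h4 : flatAdj Nt * X' * Nt = flatAdj Nt * X * Nt :=
      smul_right_injective _ hc0 h2
    rw [hflatNt] at h4
    have h5 := congrArg (fun Z => Nt⁻¹ * Z * Nt⁻¹) h4
    simpa [sandwich] using h5
  · -- part (ii) and (iii)
    intro hu
    have huA : IsUnit (X + 1) := by rwa [add_comm] at hu
    have hdA := (Matrix.isUnit_iff_isUnit_det _).mp huA
    have hAr : (X + 1) * (X + 1)⁻¹ = 1 := Matrix.mul_nonsing_inv _ hdA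
    have hAl : (X + 1)⁻¹ * (X + 1) = 1 := Matrix.nonsing_inv_mul _ hdA
    have hfA : flatAdj (X + 1) = -(X - 1) := by
      rw [flatAdj_add, flatAdj_one, hflatX]; abel
    have huB : IsUnit (X - 1) := by
      have h1 := isUnit_flatAdj huA
      rw [hfA] at h1
      have h2 := h1.neg
      rwa [neg_neg] at h2
    have hdB := (Matrix.isUnit_iff_isUnit_det _).mp huB
    have hBr : (X - 1) * (X - 1)⁻¹ = 1 := Matrix.mul_nonsing_inv _ hdB
    have hBl : (X - 1)⁻¹ * (X - 1) = 1 := Matrix.nonsing_inv_mul _ hdB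
    have hcomm : (X - 1) * (X + 1) = (X + 1) * (X - 1) := by noncomm_ring
    have hcomm_inv : (X - 1) * (X + 1)⁻¹ = (X + 1)⁻¹ * (X - 1) := by
      have h := congrArg (fun Z => (X + 1)⁻¹ * (Z * (X + 1)⁻¹)) hcomm
      simp only [← Matrix.mul_assoc] at h
      rw [Matrix.mul_assoc ((X + 1)⁻¹ * (X - 1)), hAr, Matrix.mul_one, hAl, Matrix.one_mul] at h
      exact h.symm
    have h1mR : (1 : Matrix (Fin n ⊕ Fin n) (Fin n ⊕ Fin n) ℂ) - (X - 1) * (X + 1)⁻¹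
        = (2 : ℂ) • (X + 1)⁻¹ := by
      have h1 : (1 : Matrix (Fin n ⊕ Fin n) (Fin n ⊕ Fin n) ℂ) - (X - 1) * (X + 1)⁻¹
          = ((X + 1) - (X - 1)) * (X + 1)⁻¹ := by
        rw [Matrix.sub_mul (X + 1) (X - 1), hAr]
      rw [h1, show (X + 1) - (X - 1)
        = (2 : ℂ) • (1 : Matrix (Fin n ⊕ Fin n) (Fin n ⊕ Fin n) ℂ) by module]
      rw [Matrix.smul_mul, Matrix.one_mul]
    have h1mRinv : ((1 : Matrix (Fin n ⊕ Fin n) (Fin n ⊕ Fin n) ℂ) - (X - 1) * (X + 1)⁻¹)⁻¹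
        = (2⁻¹ : ℂ) • (X + 1) := by
      apply Matrix.inv_eq_right_inv
      rw [h1mR, Matrix.smul_mul, Matrix.mul_smul, smul_smul, hAl]
      norm_num
    have h1mRu : IsUnit ((1 : Matrix (Fin n ⊕ Fin n) (Fin n ⊕ Fin n) ℂ) - (X - 1) * (X + 1)⁻¹) := by
      apply (Matrix.isUnit_iff_isUnit_det _).mpr
      apply Matrix.isUnit_det_of_right_inverse (B := (2⁻¹ : ℂ) • (X + 1))
      rw [h1mR, Matrix.smul_mul, Matrix.mul_smul, smul_smul, hAl]
      norm_num
    have h1pR : (1 : Matrix (Fin n ⊕ Fin n) (Fin n ⊕ Fin n) ℂ) + (X - 1) * (X + 1)⁻¹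
        = (2 : ℂ) • (X * (X + 1)⁻¹) := by
      have h1 : (1 : Matrix (Fin n ⊕ Fin n) (Fin n ⊕ Fin n) ℂ) + (X - 1) * (X + 1)⁻¹
          = ((X + 1) + (X - 1)) * (X + 1)⁻¹ := by
        rw [Matrix.add_mul (X + 1) (X - 1), hAr]
      rw [h1, show (X + 1) + (X - 1) = (2 : ℂ) • X by module, Matrix.smul_mul]
    have hcayley : (1 + (X - 1) * (X + 1)⁻¹) * (1 - (X - 1) * (X + 1)⁻¹)⁻¹ = X := by
      rw [h1pR, h1mRinv, Matrix.smul_mul, Matrix.mul_smul, smul_smul]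
      norm_num
      rw [Matrix.mul_assoc, hAl, Matrix.mul_one]
    -- flatAdj of R
    have hfB : flatAdj (X - 1) = -(X + 1) := by
      rw [flatAdj_sub, flatAdj_one, hflatX]; abel
    have hfR : flatAdj ((X - 1) * (X + 1)⁻¹) = (X - 1)⁻¹ * (X + 1) := by
      rw [flatAdj_mul, hfB, flatAdj_inv, hfA]
      rw [show (-(X - 1))⁻¹ = -(X - 1)⁻¹ by
        apply Matrix.inv_eq_right_inv
        rw [Matrix.neg_mul, Matrix.mul_neg, neg_neg, hBr]]
      rw [Matrix.neg_mul, Matrix.mul_neg, neg_neg]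
    -- ♭-unitarity
    have hinv2 : (X + 1)⁻¹ * (X - 1)⁻¹ = (X - 1)⁻¹ * (X + 1)⁻¹ := by
      rw [← Matrix.mul_inv_rev, ← Matrix.mul_inv_rev, hcomm]
    have hRfR : (X - 1) * (X + 1)⁻¹ * flatAdj ((X - 1) * (X + 1)⁻¹) = 1 := by
      rw [hfR]
      calc (X - 1) * (X + 1)⁻¹ * ((X - 1)⁻¹ * (X + 1))
          = (X - 1) * ((X + 1)⁻¹ * (X - 1)⁻¹) * (X + 1) := by
            simp only [Matrix.mul_assoc]
        _ = (X - 1) * (X - 1)⁻¹ * ((X + 1)⁻¹ * (X + 1)) := by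
            rw [hinv2]; simp only [Matrix.mul_assoc]
        _ = 1 := by rw [hBr, hAl, Matrix.one_mul]
    have hfRR : flatAdj ((X - 1) * (X + 1)⁻¹) * ((X - 1) * (X + 1)⁻¹) = 1 := by
      rw [hfR]
      calc (X - 1)⁻¹ * (X + 1) * ((X - 1) * (X + 1)⁻¹)
          = (X - 1)⁻¹ * ((X + 1) * (X - 1)) * (X + 1)⁻¹ := by
            simp only [Matrix.mul_assoc]
        _ = (X - 1)⁻¹ * ((X - 1) * (X + 1)) * (X + 1)⁻¹ := by rw [hcomm]
        _ = 1 := by rw [← Matrix.mul_assoc, hBl, Matrix.one_mul, hAr]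
    -- doubled-up
    have hSB : Sig n * (X - 1) * Sig n = (X - 1).map (starRingEnd ℂ) := by
      rw [Matrix.mul_sub, Matrix.mul_one, Matrix.sub_mul, Sig_mul_Sig, mapc_sub, mapc_one, hduX']
    have hSA : Sig n * (X + 1) * Sig n = (X + 1).map (starRingEnd ℂ) := by
      rw [Matrix.mul_add, Matrix.mul_one, Matrix.add_mul, Sig_mul_Sig, mapc_add, mapc_one, hduX']
    have hmapAinv : ((X + 1).map (starRingEnd ℂ))⁻¹ = ((X + 1)⁻¹).map (starRingEnd ℂ) := by
      apply Matrix.inv_eq_right_inv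
      rw [← mapc_mul, hAr, mapc_one]
    have hSAi : Sig n * (X + 1)⁻¹ * Sig n = ((X + 1)⁻¹).map (starRingEnd ℂ) := by
      have h1 : (Sig n * (X + 1) * Sig n)⁻¹ = ((X + 1).map (starRingEnd ℂ))⁻¹ := by rw [hSA]
      rw [Matrix.mul_inv_rev, Matrix.mul_inv_rev, Sig_inv, hmapAinv] at h1
      rw [Matrix.mul_assoc]
      exact h1
    have hduR : DoubledUp ((X - 1) * (X + 1)⁻¹) := by
      rw [DoubledUp, hSprod, hSB, hSAi, mapc_mul]
    refine ⟨⟨hduR, hRfR, hfRR⟩, h1mRu, hcayley, ?_, ?_⟩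
    · -- uniqueness of R
      intro R' _ hu' hR'
      have hdR' := (Matrix.isUnit_iff_isUnit_det _).mp hu'
      have hR'l : ((1 : Matrix (Fin n ⊕ Fin n) (Fin n ⊕ Fin n) ℂ) - R')⁻¹ * (1 - R') = 1 :=
        Matrix.nonsing_inv_mul _ hdR'
      have h1 : (1 : Matrix (Fin n ⊕ Fin n) (Fin n ⊕ Fin n) ℂ) + R' = X * (1 - R') := by
        rw [← hR', Matrix.mul_assoc, hR'l, Matrix.mul_one]
      have h2 : (X + 1) * R' = X - 1 := by
        rw [Matrix.mul_sub, Matrix.mul_one] at h1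
        calc (X + 1) * R' = (1 + R') + X * R' - 1 := by noncomm_ring
          _ = (X - X * R') + X * R' - 1 := by rw [h1]
          _ = X - 1 := by abel
      have h4 := congrArg (fun Z => (X + 1)⁻¹ * Z) h2
      rw [← Matrix.mul_assoc, hAl, Matrix.one_mul] at h4
      rw [h4, hcomm_inv]
    · -- part (iii)
      intro N _
      have hRR : (X - 1) * (X + 1)⁻¹ * (1 - (X - 1) * (X + 1)⁻¹)⁻¹
          = (2⁻¹ : ℂ) • (X - 1) := by
        rw [h1mRinv, Matrix.mul_smul, Matrix.mul_assoc, hAl, Matrix.mul_one]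
      rw [hflatNt, hRR, Matrix.mul_smul, Matrix.smul_mul]
      have hNB : Nt * (X - 1) * Nt = (2 * Complex.I) • D0 - Nt * Nt := by
        rw [Matrix.mul_sub, Matrix.mul_one, Matrix.sub_mul, hNXN]
      rw [hNB, hD0]
      module
end
end

section
/- Let R be a 2k×2k complex matrix with I − R invertible, and set X = (I + R)(I − R)^{-1}. Then X is doubled-up and ♭-skew-Hermitian (X^♭ = −X) if and only if R is Bogoliubov. Conversely, if X is a 2k×2k doubled-up matrix with X^♭ = −X such that X + I is invertible, then R := (X − I)(X + I)^{-1} is Bogoliubov, I − R is invertible, and (I + R)(I − R)^{-1} = X. -/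
open Matrix

noncomputable section

namespace CayleyAux

variable {k : ℕ}

abbrev M (k : ℕ) := Matrix (Fin k ⊕ Fin k) (Fin k ⊕ Fin k) ℂ

lemma Sig_mul_Sig : Sig k * Sig k = 1 := by
  simp [Sig, Matrix.fromBlocks_multiply, ← Matrix.fromBlocks_one]

lemma Jmat_mul_Jmat : Jmat k * Jmat k = 1 := by
  simp [Jmat, Matrix.fromBlocks_multiply, ← Matrix.fromBlocks_one]

lemma Sig_inv : (Sig k)⁻¹ = Sig k := Matrix.inv_eq_right_inv Sig_mul_Sig

lemma Jmat_inv : (Jmat k)⁻¹ = Jmat k := Matrix.inv_eq_right_inv Jmat_mul_Jmat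

lemma isUnit_of_right {A B : M k} (h : A * B = 1) : IsUnit A :=
  @isUnit_of_invertible _ _ _ (invertibleOfRightInverse _ _ h)

lemma flatAdj_one : flatAdj (1 : M k) = 1 := by
  simp [flatAdj, Jmat_mul_Jmat]

lemma flatAdj_mul (A B : M k) : flatAdj (A * B) = flatAdj B * flatAdj A := by
  unfold flatAdj
  rw [conjTranspose_mul]
  calc Jmat k * (Bᴴ * Aᴴ) * Jmat k
      = Jmat k * Bᴴ * (Jmat k * Jmat k) * Aᴴ * Jmat k := by
        rw [Jmat_mul_Jmat]; noncomm_ring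
    _ = Jmat k * Bᴴ * Jmat k * (Jmat k * Aᴴ * Jmat k) := by noncomm_ring

lemma flatAdj_add (A B : M k) : flatAdj (A + B) = flatAdj A + flatAdj B := by
  simp [flatAdj, conjTranspose_add, Matrix.add_mul, Matrix.mul_add]

lemma flatAdj_sub (A B : M k) : flatAdj (A - B) = flatAdj A - flatAdj B := by
  simp [flatAdj, conjTranspose_sub, Matrix.sub_mul, Matrix.mul_sub]

lemma flatAdj_inv (A : M k) : flatAdj A⁻¹ = (flatAdj A)⁻¹ := by
  unfold flatAdj
  rw [Matrix.mul_inv_rev, Matrix.mul_inv_rev, Jmat_inv, conjTranspose_nonsing_inv,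
    Matrix.mul_assoc]

lemma two_cancel {A B : M k} (h : A + A = B + B) : A = B := by
  have h2 : (2 : ℂ) • A = (2 : ℂ) • B := by rw [two_smul, two_smul]; exact h
  exact smul_right_injective (M k) two_ne_zero h2

lemma cayley_inj {A B : M k} (hA : IsUnit (1 - A)) (hB : IsUnit (1 - B))
    (h : (1 + A) * (1 - A)⁻¹ = (1 + B) * (1 - B)⁻¹) : A = B := by
  have hA' := (Matrix.isUnit_iff_isUnit_det _).mp hA
  have hB' := (Matrix.isUnit_iff_isUnit_det _).mp hB
  have h1 : (1 + A) * (1 - A)⁻¹ * (1 - B) = 1 + B := by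
    rw [h, Matrix.nonsing_inv_mul_cancel_right _ _ hB']
  have h3 : (1 + A) * (1 - B) = (1 - A) * (1 + B) := by
    calc (1 + A) * (1 - B)
        = (1 - A) * (1 + A) * (1 - A)⁻¹ * (1 - B) := by
          rw [show (1 - A) * (1 + A) = (1 + A) * (1 - A) from by noncomm_ring,
            Matrix.mul_nonsing_inv_cancel_right _ _ hA']
      _ = (1 - A) * ((1 + A) * (1 - A)⁻¹ * (1 - B)) := by noncomm_ring
      _ = (1 - A) * (1 + B) := by rw [h1]
  apply two_cancel
  have h4 : (A + A) - (B + B) = (1 + A) * (1 - B) - (1 - A) * (1 + B) := by noncomm_ring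
  rw [h3, sub_self] at h4
  exact sub_eq_zero.mp h4

lemma flat_iff {R : M k} (hR : IsUnit (1 - R)) :
    flatAdj ((1 + R) * (1 - R)⁻¹) = -((1 + R) * (1 - R)⁻¹) ↔ flatAdj R * R = 1 := by
  have hRd := (Matrix.isUnit_iff_isUnit_det _).mp hR
  set F := flatAdj R with hF
  have hmul : (1 - R) * (1 - R)⁻¹ = 1 := Matrix.mul_nonsing_inv _ hRd
  have hfl1 : flatAdj ((1 : M k) - R) = 1 - F := by rw [flatAdj_sub, flatAdj_one]
  have hfmul : (1 - F) * flatAdj ((1 - R)⁻¹) = 1 := by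
    have := congrArg flatAdj hmul
    rw [flatAdj_mul, flatAdj_one, hfl1] at this
    exact mul_eq_one_comm.mp this
  have hFu : IsUnit ((1 : M k) - F) := isUnit_of_right hfmul
  have hFd := (Matrix.isUnit_iff_isUnit_det _).mp hFu
  have hLHS : flatAdj ((1 + R) * (1 - R)⁻¹) = (1 - F)⁻¹ * (1 + F) := by
    rw [flatAdj_mul, flatAdj_inv, hfl1, flatAdj_add, flatAdj_one]
  rw [hLHS]
  constructor
  · intro h
    have h1 : (1 - F) * ((1 - F)⁻¹ * (1 + F)) * (1 - R) =
        (1 - F) * (-((1 + R) * (1 - R)⁻¹)) * (1 - R) := by rw [h]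
    rw [Matrix.mul_nonsing_inv_cancel_left _ _ hFd] at h1
    have h2 : (1 - F) * (-((1 + R) * (1 - R)⁻¹)) * (1 - R) = -((1 - F) * (1 + R)) := by
      calc (1 - F) * (-((1 + R) * (1 - R)⁻¹)) * (1 - R)
          = -((1 - F) * ((1 + R) * (1 - R)⁻¹ * (1 - R))) := by noncomm_ring
        _ = -((1 - F) * (1 + R)) := by
            rw [Matrix.nonsing_inv_mul_cancel_right _ _ hRd]
    rw [h2] at h1
    apply two_cancel
    have h4 : (F * R + F * R) - ((1 : M k) + 1) =
        -((1 - F) * (1 + R)) - (1 + F) * (1 - R) := by noncomm_ring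
    rw [← h1, sub_self] at h4
    exact sub_eq_zero.mp h4
  · intro h
    have h3 : (1 + F) * (1 - R) = -((1 - F) * (1 + R)) := by
      have e1 : (1 + F) * (1 - R) = 1 - F * R + (F - R) := by noncomm_ring
      have e2 : -((1 - F) * (1 + R)) = F * R - 1 + (F - R) := by noncomm_ring
      rw [e1, e2, h]
    calc (1 - F)⁻¹ * (1 + F)
        = (1 - F)⁻¹ * ((1 + F) * (1 - R) * (1 - R)⁻¹) := by
          rw [Matrix.mul_nonsing_inv_cancel_right _ _ hRd]
      _ = (1 - F)⁻¹ * (-((1 - F) * (1 + R)) * (1 - R)⁻¹) := by rw [h3]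
      _ = -((1 - F)⁻¹ * ((1 - F) * ((1 + R) * (1 - R)⁻¹))) := by noncomm_ring
      _ = -((1 + R) * (1 - R)⁻¹) := by
          rw [Matrix.nonsing_inv_mul_cancel_left _ _ hFd]

lemma mapStar_eq (A : M k) : A.map (starRingEnd ℂ) = (Aᴴ)ᵀ := by
  rw [conjTranspose, transpose_map, transpose_transpose]
  rfl

lemma conj_inv (A : M k) : Sig k * A⁻¹ * Sig k = (Sig k * A * Sig k)⁻¹ := by
  rw [Matrix.mul_inv_rev, Matrix.mul_inv_rev, Sig_inv, Matrix.mul_assoc]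

lemma dbl_iff {R : M k} (hR : IsUnit (1 - R)) :
    DoubledUp ((1 + R) * (1 - R)⁻¹) ↔ DoubledUp R := by
  have hRd := (Matrix.isUnit_iff_isUnit_det _).mp hR
  have hSu : IsUnit (Sig k) := isUnit_of_right Sig_mul_Sig
  set A := Sig k * R * Sig k with hA
  set B := R.map (starRingEnd ℂ) with hB
  have hSRS : Sig k * (1 - R) * Sig k = 1 - A := by
    rw [Matrix.mul_sub, Matrix.sub_mul, Matrix.mul_one, Sig_mul_Sig, hA]
  have hAu : IsUnit ((1 : M k) - A) := by
    rw [← hSRS]; exact (hSu.mul hR).mul hSu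
  have hAd := (Matrix.isUnit_iff_isUnit_det _).mp hAu
  have hBeq : (1 : M k) - B = (((1 : M k) - R)ᴴ)ᵀ := by
    rw [hB, mapStar_eq, conjTranspose_sub, transpose_sub, conjTranspose_one, transpose_one]
  have hBu : IsUnit ((1 : M k) - B) := by
    rw [Matrix.isUnit_iff_isUnit_det, hBeq, det_transpose, det_conjTranspose]
    exact isUnit_star.mpr hRd
  have hBd := (Matrix.isUnit_iff_isUnit_det _).mp hBu
  have lhs1 : Sig k * ((1 + R) * (1 - R)⁻¹) * Sig k = (1 + A) * (1 - A)⁻¹ := by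
    calc Sig k * ((1 + R) * (1 - R)⁻¹) * Sig k
        = (Sig k * (1 + R) * Sig k) * (Sig k * (1 - R)⁻¹ * Sig k) := by
          rw [show Sig k * (1 + R) * Sig k * (Sig k * (1 - R)⁻¹ * Sig k)
              = Sig k * (1 + R) * (Sig k * Sig k) * (1 - R)⁻¹ * Sig k from by noncomm_ring,
            Sig_mul_Sig]
          noncomm_ring
      _ = (1 + A) * (1 - A)⁻¹ := by
          rw [conj_inv, hSRS, Matrix.mul_add, Matrix.add_mul, Matrix.mul_one, Sig_mul_Sig]
  have lhs2 : ((1 + R) * (1 - R)⁻¹).map (starRingEnd ℂ) = (1 + B) * (1 - B)⁻¹ := by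
    rw [mapStar_eq, conjTranspose_mul, conjTranspose_nonsing_inv, transpose_mul,
      transpose_nonsing_inv]
    rw [show ((1 - R)ᴴᵀ : M k) = 1 - B from hBeq.symm]
    rw [show ((1 + R)ᴴᵀ : M k) = 1 + B from by
      rw [hB, mapStar_eq, conjTranspose_add, transpose_add, conjTranspose_one, transpose_one]]
  unfold DoubledUp
  rw [lhs1, lhs2]
  constructor
  · intro h
    exact cayley_inj hAu hBu h
  · intro h
    rw [show A = B from h]

/-- Part one of the theorem, as a standalone lemma. -/
lemma part1 (R : M k) (hR : IsUnit ((1 : M k) - R)) :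
    (DoubledUp ((1 + R) * (1 - R)⁻¹) ∧
      flatAdj ((1 + R) * (1 - R)⁻¹) = -((1 + R) * (1 - R)⁻¹)) ↔ Bogoliubov R := by
  constructor
  · rintro ⟨hd, hf⟩
    have h2 := (flat_iff hR).mp hf
    exact ⟨(dbl_iff hR).mp hd, mul_eq_one_comm.mp h2, h2⟩
  · rintro ⟨hd, _, h2⟩
    exact ⟨(dbl_iff hR).mpr hd, (flat_iff hR).mpr h2⟩

end CayleyAux

/-- Cayley transform for Bogoliubov matrices: if `I − R` is invertible and
`X = (I + R)(I − R)⁻¹`, then `X` is doubled-up and ♭-skew-Hermitian iff `R` is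
Bogoliubov.  Conversely, if `X` is doubled-up, `X^♭ = −X` and `X + I` is
invertible, then `R = (X − I)(X + I)⁻¹` is Bogoliubov, `I − R` is invertible,
and `(I + R)(I − R)⁻¹ = X`. -/
theorem bogoliubov_cayley_transform (k : ℕ) :
    (∀ R : Matrix (Fin k ⊕ Fin k) (Fin k ⊕ Fin k) ℂ,
      IsUnit ((1 : Matrix (Fin k ⊕ Fin k) (Fin k ⊕ Fin k) ℂ) - R) →
      ((DoubledUp ((1 + R) * (1 - R)⁻¹) ∧
          flatAdj ((1 + R) * (1 - R)⁻¹) = -((1 + R) * (1 - R)⁻¹))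
        ↔ Bogoliubov R)) ∧
    (∀ X : Matrix (Fin k ⊕ Fin k) (Fin k ⊕ Fin k) ℂ,
      DoubledUp X → flatAdj X = -X → IsUnit (X + 1) →
      Bogoliubov ((X - 1) * (X + 1)⁻¹) ∧
      IsUnit ((1 : Matrix (Fin k ⊕ Fin k) (Fin k ⊕ Fin k) ℂ) - (X - 1) * (X + 1)⁻¹) ∧
      (1 + (X - 1) * (X + 1)⁻¹) * (1 - (X - 1) * (X + 1)⁻¹)⁻¹ = X) := by
  refine ⟨fun R hR => CayleyAux.part1 R hR, fun X hd hf hu => ?_⟩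
  have hud := (Matrix.isUnit_iff_isUnit_det _).mp hu
  set R := (X - 1) * (X + 1)⁻¹ with hRdef
  have key1 : (1 : CayleyAux.M k) - R = (1 + 1) * (X + 1)⁻¹ := by
    calc (1 : CayleyAux.M k) - R
        = (X + 1) * (X + 1)⁻¹ - (X - 1) * (X + 1)⁻¹ := by
          rw [Matrix.mul_nonsing_inv _ hud, hRdef]
      _ = ((X + 1) - (X - 1)) * (X + 1)⁻¹ := by rw [← Matrix.sub_mul]
      _ = (1 + 1) * (X + 1)⁻¹ := by congr 1; abel
  have key2 : (1 : CayleyAux.M k) + R = (X + X) * (X + 1)⁻¹ := by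
    calc (1 : CayleyAux.M k) + R
        = (X + 1) * (X + 1)⁻¹ + (X - 1) * (X + 1)⁻¹ := by
          rw [Matrix.mul_nonsing_inv _ hud, hRdef]
      _ = ((X + 1) + (X - 1)) * (X + 1)⁻¹ := by rw [← Matrix.add_mul]
      _ = (X + X) * (X + 1)⁻¹ := by congr 1; abel
  have hone : ((1 : CayleyAux.M k) + 1) = (2 : ℂ) • 1 := by rw [two_smul]
  have hinvprod : ((1 : CayleyAux.M k) - R) * ((2 : ℂ)⁻¹ • (X + 1)) = 1 := by
    rw [key1, mul_smul_comm, Matrix.mul_assoc, Matrix.nonsing_inv_mul _ hud,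
      Matrix.mul_one, hone, smul_smul, inv_mul_cancel₀ two_ne_zero, one_smul]
  have hNR : IsUnit ((1 : CayleyAux.M k) - R) := CayleyAux.isUnit_of_right hinvprod
  have hinv : ((1 : CayleyAux.M k) - R)⁻¹ = (2 : ℂ)⁻¹ • (X + 1) :=
    Matrix.inv_eq_right_inv hinvprod
  have key3 : (1 + R) * ((1 : CayleyAux.M k) - R)⁻¹ = X := by
    rw [key2, hinv, mul_smul_comm, Matrix.mul_assoc, Matrix.nonsing_inv_mul _ hud,
      Matrix.mul_one, show X + X = (2 : ℂ) • X from (two_smul ℂ X).symm, smul_smul,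
      inv_mul_cancel₀ two_ne_zero, one_smul]
  refine ⟨?_, hNR, key3⟩
  exact (CayleyAux.part1 R hNR).mp (by rw [key3]; exact ⟨hd, hf⟩)
end
end

section
/- Let r ≤ m and let V_I be a 2m×r complex matrix such that the 2m×2r matrix [V_I, Σ_{2m}V_I^#] satisfies [V_I, Σ_{2m}V_I^#]†·J_{2m}·[V_I, Σ_{2m}V_I^#] = J_{2r} (i.e., its columns are J-orthonormal with the first r of J-norm square +1 and the last r of J-norm square −1). Then there exists a 2m×(m−r) complex matrix V_{II} such that the 2m×2m matrix V = [[V_I, V_{II}], Σ_{2m}·[V_I, V_{II}]^#] (the horizontal concatenation of V_I, V_{II}, Σ_{2m}V_I^#, Σ_{2m}V_{II}^#) is Bogoliubov. -/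
open Matrix

noncomputable section

namespace Bog

variable {m : ℕ}

local notation "V2" => (Fin m ⊕ Fin m)

abbrev cj {ι κ : Type*} (X : Matrix ι κ ℂ) : Matrix ι κ ℂ := X.map (starRingEnd ℂ)

lemma Jmat_conjT : (Jmat m)ᴴ = Jmat m := by
  simp [Jmat, fromBlocks_conjTranspose]

lemma Jmat_mul_Jmat : Jmat m * Jmat m = 1 := by
  simp [Jmat, fromBlocks_multiply, fromBlocks_one]

lemma Sig_conjT : (Sig m)ᴴ = Sig m := by
  simp [Sig, fromBlocks_conjTranspose]

lemma Sig_mul_Sig : Sig m * Sig m = 1 := by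
  simp [Sig, fromBlocks_multiply, fromBlocks_one]

lemma Sig_transpose : (Sig m)ᵀ = Sig m := by
  simp [Sig, fromBlocks_transpose]

lemma Jmat_map : cj (Jmat m) = Jmat m := by
  ext i j
  cases i <;> cases j <;> simp [Jmat, cj, Matrix.one_apply, apply_ite]

lemma Sig_map : cj (Sig m) = Sig m := by
  simp [Sig, cj, fromBlocks_map]

lemma Jmat_mul_Sig : Jmat m * Sig m = - (Sig m * Jmat m) := by
  simp [Jmat, Sig, fromBlocks_multiply, fromBlocks_neg]

lemma Sig_Jmat_Sig : Sig m * Jmat m * Sig m = - Jmat m := by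
  simp [Jmat, Sig, fromBlocks_multiply, fromBlocks_neg]

lemma JS_transpose : (Jmat m * Sig m)ᵀ = - (Jmat m * Sig m) := by
  simp [Jmat, Sig, fromBlocks_multiply, fromBlocks_transpose, fromBlocks_neg]

variable {κ : Type*}

lemma cj_conjT (F : Matrix (Fin m ⊕ Fin m) κ ℂ) : (cj F)ᴴ = Fᵀ := by
  ext i j; simp [cj, conjTranspose_apply]

lemma conjT_cj (F : Matrix (Fin m ⊕ Fin m) κ ℂ) : cj (Fᴴ) = Fᵀ := by
  ext i j; simp [cj, conjTranspose_apply]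

lemma cj_mul {ι κ' : Type*} [Fintype κ'] (X : Matrix ι κ' ℂ) (Y : Matrix κ' κ ℂ) :
    cj (X * Y) = cj X * cj Y :=
  Matrix.map_mul

lemma cj_mulVec {ι : Type*} [Fintype κ] (A : Matrix ι κ ℂ) (v : κ → ℂ) :
    (cj A) *ᵥ (star v) = star (A *ᵥ v) := by
  funext i
  simp only [Matrix.mulVec, dotProduct, Pi.star_apply, Matrix.map_apply, cj]
  rw [← starRingEnd_apply, map_sum]
  exact Finset.sum_congr rfl fun x _ => by rw [_root_.map_mul]; rfl

def cvec (u : Fin m ⊕ Fin m → ℂ) : Fin m ⊕ Fin m → ℂ := Sig m *ᵥ star u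

lemma cvec_cvec (u : Fin m ⊕ Fin m → ℂ) : cvec (cvec u) = u := by
  unfold cvec
  rw [show star (Sig m *ᵥ star u) = (cj (Sig m)) *ᵥ (star (star u)) from (cj_mulVec _ _).symm,
    Sig_map, star_star, mulVec_mulVec, Sig_mul_Sig, one_mulVec]

def jdot (x y : Fin m ⊕ Fin m → ℂ) : ℂ := star x ⬝ᵥ (Jmat m *ᵥ y)

lemma jdot_star (x y : Fin m ⊕ Fin m → ℂ) : star (jdot x y) = jdot y x := by
  unfold jdot
  rw [star_dotProduct, star_star, star_mulVec, Jmat_conjT, dotProduct_mulVec]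

lemma jdot_add_left (x y z : Fin m ⊕ Fin m → ℂ) : jdot (x + y) z = jdot x z + jdot y z := by
  unfold jdot; rw [star_add, add_dotProduct]

lemma jdot_add_right (x y z : Fin m ⊕ Fin m → ℂ) : jdot x (y + z) = jdot x y + jdot x z := by
  unfold jdot; rw [mulVec_add, dotProduct_add]

lemma jdot_smul_left (a : ℂ) (x y : Fin m ⊕ Fin m → ℂ) :
    jdot (a • x) y = star a * jdot x y := by
  unfold jdot; rw [star_smul, smul_dotProduct]; rfl

lemma jdot_smul_right (a : ℂ) (x y : Fin m ⊕ Fin m → ℂ) :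
    jdot x (a • y) = a * jdot x y := by
  unfold jdot; rw [mulVec_smul, dotProduct_smul]; rfl

lemma jdot_self_cvec (u : Fin m ⊕ Fin m → ℂ) : jdot u (cvec u) = 0 := by
  unfold jdot cvec
  rw [mulVec_mulVec]
  have hv : star u ᵥ* (Jmat m * Sig m) = (Jmat m * Sig m)ᵀ *ᵥ star u := by
    simpa using vecMul_transpose ((Jmat m * Sig m)ᵀ) (star u)
  have h1 : star u ⬝ᵥ ((Jmat m * Sig m) *ᵥ star u)
      = ((Jmat m * Sig m)ᵀ *ᵥ star u) ⬝ᵥ star u := by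
    rw [dotProduct_mulVec, hv]
  rw [JS_transpose, neg_mulVec, neg_dotProduct] at h1
  rw [dotProduct_comm ((Jmat m * Sig m) *ᵥ star u) (star u)] at h1
  exact add_self_eq_zero.mp (by linear_combination h1)
  

lemma mulVec_dot {n p : Type*} [Fintype n] [Fintype p] (A : Matrix n p ℂ) (x : p → ℂ)
    (w : n → ℂ) : (A *ᵥ x) ⬝ᵥ w = x ⬝ᵥ (Aᵀ *ᵥ w) := by
  have hv : w ᵥ* A = Aᵀ *ᵥ w := by simpa using vecMul_transpose Aᵀ w
  rw [dotProduct_comm, dotProduct_mulVec, hv, dotProduct_comm]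

lemma star_cvec (u : Fin m ⊕ Fin m → ℂ) : star (cvec u) = Sig m *ᵥ u := by
  unfold cvec
  rw [← cj_mulVec (Sig m) (star u), Sig_map, star_star]

lemma star_jdot' (x y : Fin m ⊕ Fin m → ℂ) :
    star (jdot x y) = x ⬝ᵥ star (Jmat m *ᵥ y) := by
  unfold jdot
  rw [star_dotProduct, star_star, dotProduct_comm]

lemma jdot_cvec_cvec (x y : Fin m ⊕ Fin m → ℂ) :
    jdot (cvec x) (cvec y) = - star (jdot x y) := by
  show star (cvec x) ⬝ᵥ (Jmat m *ᵥ cvec y) = _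
  rw [star_cvec]
  unfold cvec
  rw [mulVec_mulVec, mulVec_dot, mulVec_mulVec, Sig_transpose, ← mul_assoc, Sig_Jmat_Sig,
    neg_mulVec, dotProduct_neg,
    show Jmat m *ᵥ star y = star (Jmat m *ᵥ y) from by rw [← cj_mulVec (Jmat m) y, Jmat_map],
    star_jdot']

lemma jdot_cvec_left (x y : Fin m ⊕ Fin m → ℂ) :
    jdot (cvec x) y = - star (jdot x (cvec y)) := by
  have h := jdot_cvec_cvec x (cvec y)
  rwa [cvec_cvec] at h

def CondF {κ : Type*} [Fintype κ] [DecidableEq κ] (F : Matrix (Fin m ⊕ Fin m) κ ℂ) : Prop :=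
  Fᴴ * Jmat m * F = 1 ∧ Fᴴ * Jmat m * (Sig m * cj F) = 0

lemma sandwich_submatrix {κ κ' : Type*} [Fintype κ] [Fintype κ'] (e : κ' ≃ κ)
    (F G : Matrix (Fin m ⊕ Fin m) κ ℂ) (X : Matrix (Fin m ⊕ Fin m) (Fin m ⊕ Fin m) ℂ) :
    (F.submatrix id ⇑e)ᴴ * X * (G.submatrix id ⇑e) = (Fᴴ * X * G).submatrix ⇑e ⇑e := by
  ext i j
  simp [Matrix.mul_apply, Finset.mul_sum, Finset.sum_mul]

lemma mul_submatrix_id {κ κ' : Type*} (X : Matrix (Fin m ⊕ Fin m) (Fin m ⊕ Fin m) ℂ)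
    (G : Matrix (Fin m ⊕ Fin m) κ ℂ) (f : κ' → κ) :
    X * (G.submatrix id f) = (X * G).submatrix id f := by
  ext i j; simp [Matrix.mul_apply]

lemma CondF_submatrix {κ κ' : Type*} [Fintype κ] [DecidableEq κ] [Fintype κ'] [DecidableEq κ']
    (F : Matrix (Fin m ⊕ Fin m) κ ℂ) (h : CondF F) (e : κ' ≃ κ) :
    CondF (F.submatrix id ⇑e) := by
  constructor
  · rw [sandwich_submatrix e F F (Jmat m), h.1, submatrix_one_equiv]
  · have hc : cj (F.submatrix id ⇑e) = (cj F).submatrix id ⇑e := by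
      ext i j; simp [cj]
    rw [hc, mul_submatrix_id, sandwich_submatrix e F (Sig m * cj F) (Jmat m), h.2]
    simp


lemma cj_one {κ : Type*} [Fintype κ] [DecidableEq κ] :
    cj (1 : Matrix κ κ ℂ) = 1 := by
  ext i j; simp [cj, Matrix.one_apply, apply_ite]

lemma cj_transpose {κ : Type*} (F : Matrix (Fin m ⊕ Fin m) κ ℂ) : cj (Fᵀ) = Fᴴ := by
  ext i j; simp [cj, conjTranspose_apply]

/-- column matrix of a vector -/
def colM (u : Fin m ⊕ Fin m → ℂ) : Matrix (Fin m ⊕ Fin m) Unit ℂ := Matrix.of fun a _ => u a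

lemma mul_colM {ι : Type*} (X : Matrix ι (Fin m ⊕ Fin m) ℂ) (u : Fin m ⊕ Fin m → ℂ) :
    X * colM u = Matrix.of (fun i (_ : Unit) => (X *ᵥ u) i) := by
  ext i t; simp [colM, Matrix.mul_apply, Matrix.mulVec, dotProduct]

lemma colM_sandwich (x y : Fin m ⊕ Fin m → ℂ) (X : Matrix (Fin m ⊕ Fin m) (Fin m ⊕ Fin m) ℂ) :
    (colM x)ᴴ * X * colM y = Matrix.of (fun (_ _ : Unit) => star x ⬝ᵥ (X *ᵥ y)) := by
  ext t t'
  simp only [colM, Matrix.mul_apply, conjTranspose_apply, Matrix.of_apply, Matrix.mulVec,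
    dotProduct, Finset.mul_sum, Finset.sum_mul, Pi.star_apply]
  rw [Finset.sum_comm]
  exact Finset.sum_congr rfl fun a _ => Finset.sum_congr rfl fun b _ => by ring

lemma cj_colM (u : Fin m ⊕ Fin m → ℂ) : cj (colM u) = colM (star u) := by
  ext i t; simp [cj, colM]

lemma cj_fromColumns {κ κ' : Type*} (X : Matrix (Fin m ⊕ Fin m) κ ℂ)
    (Y : Matrix (Fin m ⊕ Fin m) κ' ℂ) :
    cj (fromCols X Y) = fromCols (cj X) (cj Y) := by
  ext i j; cases j <;> simp [cj, fromCols]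

lemma fromBlocks_zero' {a b c d : Type*} :
    (fromBlocks (0 : Matrix a c ℂ) (0 : Matrix a d ℂ) (0 : Matrix b c ℂ) (0 : Matrix b d ℂ)) = 0 := by
  ext i j; cases i <;> cases j <;> simp [fromBlocks]

lemma one_unit : (Matrix.of (fun (_ _ : Unit) => (1:ℂ))) = (1 : Matrix Unit Unit ℂ) := by
  ext t t'; simp [Matrix.one_apply, eq_iff_true_of_subsingleton]

lemma star_dot_self_eq_zero' {ι : Type*} [Fintype ι] (v : ι → ℂ) (h : star v ⬝ᵥ v = 0) :
    v = 0 := by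
  have hform : star v ⬝ᵥ v = ((∑ i, Complex.normSq (v i) : ℝ) : ℂ) := by
    push_cast
    simp only [dotProduct, Pi.star_apply, Complex.star_def]
    exact Finset.sum_congr rfl fun i _ => (Complex.normSq_eq_conj_mul_self).symm ▸ rfl
  rw [hform] at h
  have hsum : ∑ i, Complex.normSq (v i) = 0 := by exact_mod_cast h
  funext i
  have hi := (Finset.sum_eq_zero_iff_of_nonneg
    (fun i _ => Complex.normSq_nonneg (v i))).mp hsum i (Finset.mem_univ i)
  exact Complex.normSq_eq_zero.mp hi

lemma step {κ : Type*} [Fintype κ] [DecidableEq κ] (hk : Fintype.card κ < m)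
    (F : Matrix (Fin m ⊕ Fin m) κ ℂ) (hF : CondF F) :
    ∃ u : Fin m ⊕ Fin m → ℂ, CondF (fromCols F (colM u)) := by
  classical
  set F₂ : Matrix (Fin m ⊕ Fin m) κ ℂ := Sig m * cj F with hF2
  set G : Matrix (Fin m ⊕ Fin m) (κ ⊕ κ) ℂ := fromCols F F₂ with hG
  have hF2H : F₂ᴴ = Fᵀ * Sig m := by
    rw [hF2, conjTranspose_mul, cj_conjT, Sig_conjT]
  have hc1 : Fᴴ * Jmat m * F = 1 := hF.1
  have hc2 : Fᴴ * Jmat m * F₂ = 0 := hF.2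
  have hc3 : F₂ᴴ * Jmat m * F = 0 := by
    have h := congrArg conjTranspose hc2
    rwa [conjTranspose_zero, conjTranspose_mul (Fᴴ * Jmat m) F₂, conjTranspose_mul Fᴴ (Jmat m),
      conjTranspose_conjTranspose, Jmat_conjT, ← Matrix.mul_assoc] at h
  have hc4 : F₂ᴴ * Jmat m * F₂ = -1 := by
    calc F₂ᴴ * Jmat m * F₂ = Fᵀ * Sig m * Jmat m * (Sig m * cj F) := by rw [hF2H]
      _ = Fᵀ * (Sig m * Jmat m * Sig m) * cj F := by simp only [Matrix.mul_assoc]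
      _ = -(Fᵀ * Jmat m * cj F) := by
          rw [Sig_Jmat_Sig]; simp only [Matrix.mul_neg, Matrix.neg_mul]
      _ = -(cj (Fᴴ * Jmat m * F)) := by rw [cj_mul, cj_mul, conjT_cj, Jmat_map]
      _ = -1 := by rw [hc1, cj_one]
  have hGH : Gᴴ = fromRows Fᴴ F₂ᴴ := conjTranspose_fromCols_eq_fromRows_conjTranspose F F₂
  have hGram : Gᴴ * Jmat m * G = fromBlocks 1 0 0 (-1) := by
    rw [hG, hGH, fromRows_mul, fromRows_mul_fromCols, hc1, hc2, hc3, hc4]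
  set M : Matrix (κ ⊕ κ) (Fin m ⊕ Fin m) ℂ := Gᴴ * Jmat m with hM
  set SK : Submodule ℂ (Fin m ⊕ Fin m → ℂ) := LinearMap.ker M.mulVecLin with hSK
  have hmem : ∀ u, u ∈ SK ↔ M *ᵥ u = 0 := fun u => by
    rw [hSK, LinearMap.mem_ker, mulVecLin_apply]
  -- split of membership
  have hsplit : ∀ u, u ∈ SK ↔
      ((Fᴴ * Jmat m) *ᵥ u = 0 ∧ (F₂ᴴ * Jmat m) *ᵥ u = 0) := by
    intro u
    rw [hmem, hM, hGH, fromRows_mul, fromRows_mulVec]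
    constructor
    · intro h
      constructor
      · funext i; exact congrFun h (Sum.inl i)
      · funext i; exact congrFun h (Sum.inr i)
    · rintro ⟨h1, h2⟩
      funext i
      cases i with
      | inl i => exact congrFun h1 i
      | inr i => exact congrFun h2 i
  -- dimension of the kernel
  have hcards : Fintype.card (Fin m ⊕ Fin m) = m + m := by simp
  have hcardk : Fintype.card (κ ⊕ κ) = Fintype.card κ + Fintype.card κ := by simp
  have hrn := LinearMap.finrank_range_add_finrank_ker (M.mulVecLin)
  rw [Module.finrank_pi, hcards, ← hSK] at hrn
  have hrankM : M.rank ≤ Fintype.card (κ ⊕ κ) := rank_le_card_height M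
  have hMb : Module.finrank ℂ (LinearMap.range M.mulVecLin) ≤
      Fintype.card κ + Fintype.card κ := by
    rw [← hcardk]; exact hrankM
  have hSKpos : 0 < Module.finrank ℂ SK := by omega
  -- C-invariance of the kernel
  have hCinv : ∀ u ∈ SK, cvec u ∈ SK := by
    intro u hu
    rw [hsplit] at hu
    rw [hsplit]
    obtain ⟨h1, h2⟩ := hu
    have key1 : (Fᴴ * Jmat m) * Sig m = -(cj (F₂ᴴ * Jmat m)) := by
      calc Fᴴ * Jmat m * Sig m = Fᴴ * (Jmat m * Sig m) := by rw [Matrix.mul_assoc]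
        _ = -(Fᴴ * Sig m * Jmat m) := by
            rw [Jmat_mul_Sig]; simp only [Matrix.mul_neg, Matrix.mul_assoc]
        _ = -(cj (F₂ᴴ * Jmat m)) := by
            rw [cj_mul, hF2H, cj_mul, cj_transpose, Sig_map, Jmat_map, Matrix.mul_assoc]
    have key2 : (F₂ᴴ * Jmat m) * Sig m = -(cj (Fᴴ * Jmat m)) := by
      calc F₂ᴴ * Jmat m * Sig m = Fᵀ * (Sig m * Jmat m * Sig m) := by
            rw [hF2H]; simp only [Matrix.mul_assoc]
        _ = -(Fᵀ * Jmat m) := by rw [Sig_Jmat_Sig, Matrix.mul_neg]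
        _ = -(cj (Fᴴ * Jmat m)) := by rw [cj_mul, conjT_cj, Jmat_map]
    constructor
    · show (Fᴴ * Jmat m) *ᵥ (Sig m *ᵥ star u) = 0
      rw [mulVec_mulVec, key1, neg_mulVec, cj_mulVec, h2]
      simp
    · show (F₂ᴴ * Jmat m) *ᵥ (Sig m *ᵥ star u) = 0
      rw [mulVec_mulVec, key2, neg_mulVec, cj_mulVec, h1]
      simp
  -- decomposition of an arbitrary vector
  have hdec : ∀ z : Fin m ⊕ Fin m → ℂ, ∃ c s, s ∈ SK ∧ z = G *ᵥ c + s := by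
    have hone : (fromBlocks 1 0 0 (-1) : Matrix (κ ⊕ κ) (κ ⊕ κ) ℂ) *
        (fromBlocks 1 0 0 (-1) : Matrix (κ ⊕ κ) (κ ⊕ κ) ℂ) = 1 := by
      simp [fromBlocks_multiply, fromBlocks_one]
    have hint : LinearMap.range G.mulVecLin ⊓ SK = ⊥ := by
      rw [Submodule.eq_bot_iff]
      rintro x ⟨⟨c, rfl⟩, hxS⟩
      have hx0 : M *ᵥ (G.mulVecLin c) = 0 := (hmem _).mp hxS
      rw [mulVecLin_apply, mulVec_mulVec, hGram] at hx0
      have hc0 : c = 0 := by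
        have h2 := congrArg (fun v => (fromBlocks 1 0 0 (-1) : Matrix (κ ⊕ κ) (κ ⊕ κ) ℂ) *ᵥ v) hx0
        simpa [mulVec_mulVec, hone] using h2
      rw [hc0, map_zero]
    have hrkG : G.rank = Fintype.card (κ ⊕ κ) := by
      refine le_antisymm (rank_le_card_width G) ?_
      have hunit : IsUnit (fromBlocks 1 0 0 (-1) : Matrix (κ ⊕ κ) (κ ⊕ κ) ℂ) :=
        ⟨⟨_, _, hone, hone⟩, rfl⟩
      have h1 : (fromBlocks 1 0 0 (-1) : Matrix (κ ⊕ κ) (κ ⊕ κ) ℂ).rank = Fintype.card (κ ⊕ κ) :=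
        rank_of_isUnit _ hunit
      have h2 : (Gᴴ * Jmat m * G).rank ≤ G.rank := rank_mul_le_right (Gᴴ * Jmat m) G
      rw [hGram, h1] at h2
      exact h2
    have hsup : LinearMap.range G.mulVecLin ⊔ SK = ⊤ := by
      apply Submodule.eq_top_of_finrank_eq
      have hfr := Submodule.finrank_sup_add_finrank_inf_eq (LinearMap.range G.mulVecLin) SK
      rw [hint, finrank_bot, add_zero] at hfr
      have hGr : Module.finrank ℂ (LinearMap.range G.mulVecLin) = Fintype.card (κ ⊕ κ) := hrkG
      have hle : Module.finrank ℂ ↥(LinearMap.range G.mulVecLin ⊔ SK) ≤ m + m := by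
        have h6 := Submodule.finrank_le (LinearMap.range G.mulVecLin ⊔ SK)
        rwa [Module.finrank_pi, hcards] at h6
      have hge : m + m ≤ Module.finrank ℂ ↥(LinearMap.range G.mulVecLin ⊔ SK) := by
        rw [hfr, hGr, hcardk]
        omega
      rw [Module.finrank_pi, hcards]
      omega
    intro z
    have hz : z ∈ LinearMap.range G.mulVecLin ⊔ SK := by rw [hsup]; exact Submodule.mem_top
    obtain ⟨y, hy, s, hs, hys⟩ := Submodule.mem_sup.mp hz
    obtain ⟨c, rfl⟩ := hy
    exact ⟨c, s, hs, by rw [← hys, mulVecLin_apply]⟩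
  -- existence of a kernel vector of nonzero J-norm
  have hexist : ∃ u ∈ SK, jdot u u ≠ 0 := by
    by_contra hcon
    push_neg at hcon
    have hpol : ∀ u ∈ SK, ∀ v ∈ SK, jdot u v = 0 := by
      intro u hu v hv
      have h1 : jdot u v + jdot v u = 0 := by
        have := hcon (u + v) (SK.add_mem hu hv)
        rw [jdot_add_left, jdot_add_right, jdot_add_right, hcon u hu, hcon v hv] at this
        linear_combination this
      have h2 : jdot u v - jdot v u = 0 := by
        have := hcon (u + Complex.I • v) (SK.add_mem hu (SK.smul_mem _ hv))
        rw [jdot_add_left, jdot_add_right, jdot_add_right, jdot_smul_left, jdot_smul_right,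
          jdot_smul_left, jdot_smul_right, hcon u hu, hcon v hv] at this
        have hI : star Complex.I = -Complex.I := by
          simp [Complex.star_def, Complex.conj_I]
        rw [hI] at this
        have h3 : Complex.I * (jdot u v - jdot v u) = 0 := by linear_combination this
        rcases mul_eq_zero.mp h3 with h4 | h4
        · exact absurd h4 Complex.I_ne_zero
        · exact h4
      linear_combination (h1 + h2) / 2
    have hne : SK ≠ ⊥ := by
      intro hb
      rw [hb, finrank_bot] at hSKpos
      omega
    obtain ⟨v₀, hv₀S, hv₀⟩ := (Submodule.ne_bot_iff SK).mp hne
    obtain ⟨c, s, hsS, hz⟩ := hdec (Jmat m *ᵥ v₀)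
    have hzero : jdot v₀ (Jmat m *ᵥ v₀) = 0 := by
      rw [hz, jdot_add_right]
      have hGc : jdot v₀ (G *ᵥ c) = 0 := by
        rw [← jdot_star]
        have : jdot (G *ᵥ c) v₀ = 0 := by
          show star (G *ᵥ c) ⬝ᵥ (Jmat m *ᵥ v₀) = 0
          rw [star_mulVec, ← dotProduct_mulVec, mulVec_mulVec]
          have : Gᴴ * Jmat m = M := rfl
          rw [this, (hmem v₀).mp hv₀S, dotProduct_zero]
        rw [this, star_zero]
      rw [hGc, hpol v₀ hv₀S s hsS, add_zero]
    unfold jdot at hzero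
    rw [mulVec_mulVec, Jmat_mul_Jmat, one_mulVec] at hzero
    exact hv₀ (star_dot_self_eq_zero' v₀ hzero)
  obtain ⟨u, huS, hu0⟩ := hexist
  have hreal : (starRingEnd ℂ) (jdot u u) = jdot u u := jdot_star u u
  have him : (jdot u u).im = 0 := Complex.conj_eq_iff_im.mp hreal
  have hre : (jdot u u).re ≠ 0 := by
    intro h0
    exact hu0 (Complex.ext h0 him)
  have hcre : jdot u u = ((jdot u u).re : ℂ) := by
    rw [Complex.ext_iff]
    simp [him]
  -- normalize
  have hnorm : ∀ w ∈ SK, 0 < (jdot w w).re → jdot w w = ((jdot w w).re : ℂ) →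
      ∃ u₁ ∈ SK, jdot u₁ u₁ = 1 := by
    intro w hwS hwpos hwre
    set x : ℝ := (jdot w w).re
    have hx : (0:ℝ) < x := hwpos
    have hsq : Real.sqrt x ≠ 0 := by positivity
    refine ⟨((Real.sqrt x : ℂ))⁻¹ • w, SK.smul_mem _ hwS, ?_⟩
    rw [jdot_smul_left, jdot_smul_right, hwre]
    rw [show star (((Real.sqrt x : ℝ) : ℂ))⁻¹ = (((Real.sqrt x : ℝ) : ℂ))⁻¹ by
      rw [star_inv₀, Complex.star_def, Complex.conj_ofReal]]
    rw [← Complex.ofReal_inv, ← Complex.ofReal_mul, ← Complex.ofReal_mul, ← Complex.ofReal_one]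
    congr 1
    rw [← Real.mul_self_sqrt hx.le]
    field_simp
    rw [Real.sqrt_sq (Real.sqrt_nonneg x)]
  have hgood : ∃ u₁ ∈ SK, jdot u₁ u₁ = 1 := by
    rcases lt_or_gt_of_ne hre with hneg | hpos
    · have hcuS : cvec u ∈ SK := hCinv u huS
      have hcc : jdot (cvec u) (cvec u) = -((jdot u u).re : ℂ) := by
        rw [jdot_cvec_cvec, show star (jdot u u) = jdot u u from hreal]
        nth_rewrite 1 [hcre]
        rfl
      apply hnorm (cvec u) hcuS
      · rw [hcc]
        simpa using by linarith [hneg]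
      · rw [hcc]
        push_cast
        simp
    · exact hnorm u huS hpos hcre
  obtain ⟨u₁, hu₁S, hu₁⟩ := hgood
  clear hreal him hre hcre hu0 huS
  obtain ⟨hv1, hv2⟩ := (hsplit u₁).mp hu₁S
  obtain ⟨hw1, hw2⟩ := (hsplit (cvec u₁)).mp (hCinv u₁ hu₁S)
  have hFJu : Fᴴ * Jmat m * colM u₁ = 0 := by
    rw [mul_colM]; ext i t; simp [hv1]
  have hF2Ju : F₂ᴴ * Jmat m * colM u₁ = 0 := by
    rw [mul_colM]; ext i t; simp [hv2]
  have hFJcu : Fᴴ * Jmat m * colM (cvec u₁) = 0 := by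
    rw [mul_colM]; ext i t; simp [hw1]
  have hUJF : (colM u₁)ᴴ * Jmat m * F = 0 := by
    have h := congrArg conjTranspose hFJu
    rwa [conjTranspose_zero, conjTranspose_mul (Fᴴ * Jmat m) (colM u₁),
      conjTranspose_mul Fᴴ (Jmat m), conjTranspose_conjTranspose, Jmat_conjT,
      ← Matrix.mul_assoc] at h
  have hUJF₂ : (colM u₁)ᴴ * Jmat m * F₂ = 0 := by
    have h := congrArg conjTranspose hF2Ju
    rwa [conjTranspose_zero, conjTranspose_mul (F₂ᴴ * Jmat m) (colM u₁),
      conjTranspose_mul F₂ᴴ (Jmat m), conjTranspose_conjTranspose, Jmat_conjT,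
      ← Matrix.mul_assoc] at h
  have hUJU : (colM u₁)ᴴ * Jmat m * colM u₁ = 1 := by
    rw [colM_sandwich, show star u₁ ⬝ᵥ (Jmat m *ᵥ u₁) = 1 from hu₁, one_unit]
  have hUJcU : (colM u₁)ᴴ * Jmat m * colM (cvec u₁) = 0 := by
    rw [colM_sandwich, show star u₁ ⬝ᵥ (Jmat m *ᵥ cvec u₁) = 0 from jdot_self_cvec u₁]
    ext t t'; simp
  refine ⟨u₁, ?_, ?_⟩
  · rw [conjTranspose_fromCols_eq_fromRows_conjTranspose, fromRows_mul,
      fromRows_mul_fromCols, hc1, hFJu, hUJF, hUJU, fromBlocks_one]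
  · have hcol : Sig m * cj (fromCols F (colM u₁)) = fromCols F₂ (colM (cvec u₁)) := by
      rw [cj_fromColumns, mul_fromCols, cj_colM, mul_colM]
      rfl
    rw [hcol, conjTranspose_fromCols_eq_fromRows_conjTranspose, fromRows_mul,
      fromRows_mul_fromCols, hc2, hFJcu, hUJF₂, hUJcU, fromBlocks_zero']


lemma cj_cj {ι κ' : Type*} (X : Matrix ι κ' ℂ) : cj (cj X) = X := by
  ext i j; simp [cj]

/-- equivalence used to re-index after appending one column -/
def consEquiv (κ : Type) (d : ℕ) : κ ⊕ Fin (d + 1) ≃ (κ ⊕ Unit) ⊕ Fin d where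
  toFun x := Sum.elim (fun k => Sum.inl (Sum.inl k))
    (fun j => Fin.cases (Sum.inl (Sum.inr ())) (fun i => Sum.inr i) j) x
  invFun y := Sum.elim (Sum.elim (fun k => Sum.inl k) (fun _ => Sum.inr 0))
    (fun i => Sum.inr i.succ) y
  left_inv := by
    rintro (k | j)
    · rfl
    · induction j using Fin.cases with
      | zero => rfl
      | succ i => simp
  right_inv := by
    rintro ((k | u) | i) <;> simp

lemma extend (d : ℕ) :
    ∀ (κ : Type) [Fintype κ] [DecidableEq κ] (F : Matrix (Fin m ⊕ Fin m) κ ℂ),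
      Fintype.card κ + d = m → CondF F →
      ∃ W : Matrix (Fin m ⊕ Fin m) (Fin d) ℂ, CondF (fromCols F W) := by
  induction d with
  | zero =>
    intro κ _ _ F hcard hF
    refine ⟨0, ?_, ?_⟩
    · have e1 : Fᴴ * Jmat m * (0 : Matrix (Fin m ⊕ Fin m) (Fin 0) ℂ) = 0 :=
        Subsingleton.elim _ _
      have e2 : (0 : Matrix (Fin m ⊕ Fin m) (Fin 0) ℂ)ᴴ * Jmat m * F = 0 :=
        Subsingleton.elim _ _
      have e3 : (0 : Matrix (Fin m ⊕ Fin m) (Fin 0) ℂ)ᴴ * Jmat m *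
          (0 : Matrix (Fin m ⊕ Fin m) (Fin 0) ℂ) = 1 := Subsingleton.elim _ _
      rw [conjTranspose_fromCols_eq_fromRows_conjTranspose, fromRows_mul,
        fromRows_mul_fromCols, hF.1, e1, e2, e3, fromBlocks_one]
    · rw [cj_fromColumns, mul_fromCols, conjTranspose_fromCols_eq_fromRows_conjTranspose,
        fromRows_mul, fromRows_mul_fromCols, hF.2]
      rw [Subsingleton.elim (Fᴴ * Jmat m * (Sig m * cj (0 : Matrix (Fin m ⊕ Fin m) (Fin 0) ℂ)))
        (0 : Matrix κ (Fin 0) ℂ)]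
      rw [Subsingleton.elim ((0 : Matrix (Fin m ⊕ Fin m) (Fin 0) ℂ)ᴴ * Jmat m * (Sig m * cj F))
        (0 : Matrix (Fin 0) κ ℂ)]
      rw [Subsingleton.elim ((0 : Matrix (Fin m ⊕ Fin m) (Fin 0) ℂ)ᴴ * Jmat m *
        (Sig m * cj (0 : Matrix (Fin m ⊕ Fin m) (Fin 0) ℂ))) (0 : Matrix (Fin 0) (Fin 0) ℂ)]
      exact fromBlocks_zero'
  | succ d ih =>
    intro κ _ _ F hcard hF
    have hk : Fintype.card κ < m := by omega
    obtain ⟨u, hu⟩ := step hk F hF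
    have hcard' : Fintype.card (κ ⊕ Unit) + d = m := by
      simp only [Fintype.card_sum, Fintype.card_unit]
      omega
    obtain ⟨W', hW'⟩ := ih (κ ⊕ Unit) (fromCols F (colM u)) hcard' hu
    refine ⟨Matrix.of (fun a j => Fin.cases (u a) (fun i => W' a i) j), ?_⟩
    have hEq : fromCols F (Matrix.of (fun a j => Fin.cases (u a) (fun i => W' a i) j))
        = (fromCols (fromCols F (colM u)) W').submatrix id ⇑(consEquiv κ d) := by
      ext a x
      rcases x with k | j
      · rfl
      · induction j using Fin.cases with
        | zero => rfl
        | succ i => simp [consEquiv, fromCols, colM]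
    rw [hEq]
    exact CondF_submatrix _ hW' (consEquiv κ d)

lemma gram {κ : Type*} [Fintype κ] [DecidableEq κ] (F : Matrix (Fin m ⊕ Fin m) κ ℂ)
    (hF : CondF F) :
    (fromCols F (Sig m * cj F))ᴴ * Jmat m * fromCols F (Sig m * cj F)
      = fromBlocks 1 0 0 (-1) := by
  have hF2H : (Sig m * cj F)ᴴ = Fᵀ * Sig m := by
    rw [conjTranspose_mul, cj_conjT, Sig_conjT]
  have hc1 : Fᴴ * Jmat m * F = 1 := hF.1
  have hc2 : Fᴴ * Jmat m * (Sig m * cj F) = 0 := hF.2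
  have hc3 : (Sig m * cj F)ᴴ * Jmat m * F = 0 := by
    have h := congrArg conjTranspose hc2
    rwa [conjTranspose_zero, conjTranspose_mul (Fᴴ * Jmat m) (Sig m * cj F),
      conjTranspose_mul Fᴴ (Jmat m), conjTranspose_conjTranspose, Jmat_conjT,
      ← Matrix.mul_assoc] at h
  have hc4 : (Sig m * cj F)ᴴ * Jmat m * (Sig m * cj F) = -1 := by
    calc (Sig m * cj F)ᴴ * Jmat m * (Sig m * cj F)
        = Fᵀ * (Sig m * Jmat m * Sig m) * cj F := by
          rw [hF2H]; simp only [Matrix.mul_assoc]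
      _ = -(Fᵀ * Jmat m * cj F) := by
          rw [Sig_Jmat_Sig]; simp only [Matrix.mul_neg, Matrix.neg_mul]
      _ = -(cj (Fᴴ * Jmat m * F)) := by rw [cj_mul, cj_mul, conjT_cj, Jmat_map]
      _ = -1 := by rw [hc1, cj_one]
  rw [conjTranspose_fromCols_eq_fromRows_conjTranspose, fromRows_mul,
    fromRows_mul_fromCols, hc1, hc2, hc3, hc4]

lemma bog_of_cond (C : Matrix (Fin m ⊕ Fin m) (Fin m) ℂ) (hC : CondF C) :
    Bogoliubov (fromCols C (Sig m * cj C)) := by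
  have hgram := gram C hC
  have hdu : DoubledUp (fromCols C (Sig m * cj C)) := by
    show Sig m * fromCols C (Sig m * cj C) * Sig m = _
    have h1 : Sig m * fromCols C (Sig m * cj C) = fromCols (Sig m * C) (cj C) := by
      rw [mul_fromCols, ← Matrix.mul_assoc, Sig_mul_Sig, Matrix.one_mul]
    have h3 : (fromCols C (Sig m * cj C)).map (starRingEnd ℂ)
        = fromCols (cj C) (Sig m * C) := by
      rw [show (fromCols C (Sig m * cj C)).map (starRingEnd ℂ)
          = cj (fromCols C (Sig m * cj C)) from rfl, cj_fromColumns, cj_mul, Sig_map, cj_cj]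
    rw [h3, h1]
    have h4 : fromCols (Sig m * C) (cj C) *
        (fromBlocks 0 1 1 0 : Matrix (Fin m ⊕ Fin m) (Fin m ⊕ Fin m) ℂ)
        = fromCols (cj C) (Sig m * C) := by
      rw [fromCols_mul_fromBlocks]
      simp only [Matrix.mul_zero, Matrix.mul_one, zero_add, add_zero]
    exact h4
  have hflat : flatAdj (fromCols C (Sig m * cj C)) * fromCols C (Sig m * cj C) = 1 := by
    show Jmat m * (fromCols C (Sig m * cj C))ᴴ * Jmat m * fromCols C (Sig m * cj C) = 1
    calc Jmat m * (fromCols C (Sig m * cj C))ᴴ * Jmat m * fromCols C (Sig m * cj C)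
        = Jmat m * ((fromCols C (Sig m * cj C))ᴴ * Jmat m * fromCols C (Sig m * cj C)) := by
          simp only [Matrix.mul_assoc]
      _ = 1 := by
          rw [hgram,
            show (fromBlocks 1 0 0 (-1) : Matrix (Fin m ⊕ Fin m) (Fin m ⊕ Fin m) ℂ) = Jmat m
              from rfl, Jmat_mul_Jmat]
  exact ⟨hdu, mul_eq_one_comm.mpr hflat, hflat⟩

end Bog

open Bog

/-- Completion of a J-orthonormal doubled-up family to a Bogoliubov matrix:
if the columns of `A = [V_I, Σ V_I^#]` are J-orthonormal
(`A† J_{2m} A = J_{2r}`), then there is a `2m × (m − r)` matrix `V_II` such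
that `V = [[V_I, V_II], Σ[V_I, V_II]^#]` is Bogoliubov. -/
theorem bogoliubov_completion (m r : ℕ) (hr : r ≤ m)
    (VI : Matrix (Fin m ⊕ Fin m) (Fin r) ℂ)
    (A : Matrix (Fin m ⊕ Fin m) (Fin r ⊕ Fin r) ℂ)
    (hA : A = Matrix.of fun a b => Sum.elim (fun j => VI a j)
      (fun j => (Sig m * VI.map (starRingEnd ℂ)) a j) b)
    (horth : Aᴴ * Jmat m * A = Jmat r) :
    ∃ (VII : Matrix (Fin m ⊕ Fin m) (Fin (m - r)) ℂ)
      (C : Matrix (Fin m ⊕ Fin m) (Fin m) ℂ)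
      (V : Matrix (Fin m ⊕ Fin m) (Fin m ⊕ Fin m) ℂ),
      C = Matrix.of (fun a j => Sum.elim (fun j' => VI a j') (fun j' => VII a j')
        ((finSumFinEquiv.trans (finCongr (Nat.add_sub_cancel' hr))).symm j)) ∧
      V = Matrix.of (fun a b => Sum.elim (fun j => C a j)
        (fun j => (Sig m * C.map (starRingEnd ℂ)) a j) b) ∧
      Bogoliubov V := by
  have hA' : A = fromCols VI (Sig m * cj VI) := by rw [hA]; rfl
  rw [hA', conjTranspose_fromCols_eq_fromRows_conjTranspose, fromRows_mul,
    fromRows_mul_fromCols] at horth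
  have h11 : VIᴴ * Jmat m * VI = 1 := by
    have h := congrArg Matrix.toBlocks₁₁ horth
    simpa [Jmat] using h
  have h12 : VIᴴ * Jmat m * (Sig m * cj VI) = 0 := by
    have h := congrArg Matrix.toBlocks₁₂ horth
    simpa [Jmat] using h
  have hCondVI : CondF VI := ⟨h11, h12⟩
  have hcardr : Fintype.card (Fin r) + (m - r) = m := by
    simp only [Fintype.card_fin]
    omega
  obtain ⟨W, hW⟩ := extend (m - r) (Fin r) VI hcardr hCondVI
  have hCond : CondF ((fromCols VI W).submatrix id
      ⇑(finSumFinEquiv.trans (finCongr (Nat.add_sub_cancel' hr))).symm) :=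
    CondF_submatrix _ hW _
  refine ⟨W,
    (fromCols VI W).submatrix id ⇑(finSumFinEquiv.trans (finCongr (Nat.add_sub_cancel' hr))).symm,
    fromCols ((fromCols VI W).submatrix id
      ⇑(finSumFinEquiv.trans (finCongr (Nat.add_sub_cancel' hr))).symm)
      (Sig m * cj ((fromCols VI W).submatrix id
      ⇑(finSumFinEquiv.trans (finCongr (Nat.add_sub_cancel' hr))).symm)), ?_, ?_, ?_⟩
  · rfl
  · rfl
  · exact bog_of_cond _ hCond
end
end

section
/- Let T be a 2k×2k complex matrix and define S = Φ_{2k}·T·Φ_{2k}^{-1}, where Φ_{2k} = (1/√2)·[[I_k, I_k],[−i·I_k, i·I_k]]. Then T is Bogoliubov if and only if S is a real matrix satisfying S⊤𝕁_{2k}S = 𝕁_{2k} (i.e., S is real symplectic). Consequently T ↦ Φ_{2k}TΦ_{2k}^{-1} is a group isomorphism from the Bogoliubov group onto the real symplectic group. -/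
open Matrix

noncomputable section

/-- `Φ_{2k} = (1/√2)[[I, I],[−iI, iI]]`. -/
def Phi (k : ℕ) : Matrix (Fin k ⊕ Fin k) (Fin k ⊕ Fin k) ℂ :=
  ((Real.sqrt 2 : ℂ))⁻¹ • Matrix.fromBlocks 1 1
    (-(Complex.I • (1 : Matrix (Fin k) (Fin k) ℂ))) (Complex.I • (1 : Matrix (Fin k) (Fin k) ℂ))

/-- The symplectic unit `𝕁_{2k} = [[0, I],[−I, 0]]` (over `ℂ`). -/
def Jsymp (k : ℕ) : Matrix (Fin k ⊕ Fin k) (Fin k ⊕ Fin k) ℂ :=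
  Matrix.fromBlocks 0 1 (-1) 0

namespace BogoAux

lemma csq : ((Real.sqrt 2 : ℂ))⁻¹ * ((Real.sqrt 2 : ℂ))⁻¹ = (2:ℂ)⁻¹ := by
  rw [← mul_inv, ← Complex.ofReal_mul, Real.mul_self_sqrt (by norm_num)]
  norm_num

lemma two_blocks (k : ℕ) : (fromBlocks (2:Matrix (Fin k) (Fin k) ℂ) 0 0 2)
    = (2:ℂ) • (1 : Matrix (Fin k ⊕ Fin k) (Fin k ⊕ Fin k) ℂ) := by
  rw [← Matrix.fromBlocks_one, Matrix.fromBlocks_smul]; norm_num [two_smul]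

lemma sig_sq (k : ℕ) : Sig k * Sig k = 1 := by
  simp [Sig, Matrix.fromBlocks_multiply, ← Matrix.fromBlocks_one]

lemma jmat_sq (k : ℕ) : Jmat k * Jmat k = 1 := by
  simp [Jmat, Matrix.fromBlocks_multiply, ← Matrix.fromBlocks_one]

lemma phi_phiH (k : ℕ) : Phi k * (Phi k)ᴴ = 1 := by
  simp only [Phi, Matrix.conjTranspose_smul, Matrix.fromBlocks_conjTranspose,
    Matrix.conjTranspose_neg, Matrix.conjTranspose_smul, Matrix.conjTranspose_one,
    Matrix.smul_mul, Matrix.mul_smul, smul_smul, Matrix.fromBlocks_multiply,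
    Complex.star_def, Complex.conj_I, Complex.conj_ofReal, map_inv₀, mul_one, one_mul,
    neg_smul, smul_neg, neg_neg, Complex.I_mul_I, neg_mul, mul_neg, csq, one_smul,
    add_neg_cancel, neg_add_cancel, smul_add, ← add_smul]
  norm_num
  rw [two_blocks, smul_smul]
  norm_num

lemma phiH_phi (k : ℕ) : (Phi k)ᴴ * Phi k = 1 := mul_eq_one_comm.mp (phi_phiH k)

lemma phi_inv (k : ℕ) : (Phi k)⁻¹ = (Phi k)ᴴ := Matrix.inv_eq_right_inv (phi_phiH k)

variable {k : ℕ}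

lemma phiH_phi_assoc (M : Matrix (Fin k ⊕ Fin k) (Fin k ⊕ Fin k) ℂ) :
    (Phi k)ᴴ * (Phi k * M) = M := by rw [← Matrix.mul_assoc, phiH_phi, Matrix.one_mul]

lemma phi_phiH_assoc (M : Matrix (Fin k ⊕ Fin k) (Fin k ⊕ Fin k) ℂ) :
    Phi k * ((Phi k)ᴴ * M) = M := by rw [← Matrix.mul_assoc, phi_phiH, Matrix.one_mul]

lemma sig_sig_assoc (M : Matrix (Fin k ⊕ Fin k) (Fin k ⊕ Fin k) ℂ) :
    Sig k * (Sig k * M) = M := by rw [← Matrix.mul_assoc, sig_sq, Matrix.one_mul]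

lemma jmat_jmat_assoc (M : Matrix (Fin k ⊕ Fin k) (Fin k ⊕ Fin k) ℂ) :
    Jmat k * (Jmat k * M) = M := by rw [← Matrix.mul_assoc, jmat_sq, Matrix.one_mul]

lemma conj_cancel {A B : Matrix (Fin k ⊕ Fin k) (Fin k ⊕ Fin k) ℂ}
    (h : Phi k * A * (Phi k)ᴴ = Phi k * B * (Phi k)ᴴ) : A = B := by
  have h2 := congrArg (fun M => (Phi k)ᴴ * M * Phi k) h
  simpa [Matrix.mul_assoc, phiH_phi_assoc, phiH_phi, Matrix.mul_one] using h2

lemma mapH (M : Matrix (Fin k ⊕ Fin k) (Fin k ⊕ Fin k) ℂ) :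
    (Mᴴ).map (starRingEnd ℂ) = (M.map (starRingEnd ℂ))ᴴ := by
  ext a b; simp [Matrix.conjTranspose_apply, Matrix.map_apply]

lemma mapPhi : (Phi k).map (starRingEnd ℂ) = Phi k * Sig k := by
  have hR : Phi k * Sig k = ((Real.sqrt 2 : ℂ))⁻¹ • Matrix.fromBlocks 1 1
      (Complex.I • (1 : Matrix (Fin k) (Fin k) ℂ))
      (-(Complex.I • (1 : Matrix (Fin k) (Fin k) ℂ))) := by
    simp [Phi, Sig, Matrix.smul_mul, Matrix.fromBlocks_multiply]
  rw [hR]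
  ext a b
  rcases a with a | a <;> rcases b with b | b <;>
    simp [Phi, Matrix.map_apply, Matrix.smul_apply, Matrix.fromBlocks, Matrix.one_apply,
      apply_ite, Complex.conj_ofReal, map_inv₀, mul_ite, mul_zero, mul_one, Complex.conj_I]
  all_goals (intro h1 h2; exact absurd h1 h2)

lemma mapPhiH : ((Phi k)ᴴ).map (starRingEnd ℂ) = Sig k * (Phi k)ᴴ := by
  rw [mapH, mapPhi, Matrix.conjTranspose_mul]
  congr 1
  simp [Sig, Matrix.fromBlocks_conjTranspose]

lemma real_iff (M : Matrix (Fin k ⊕ Fin k) (Fin k ⊕ Fin k) ℂ) :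
    (∀ a b, (M a b).im = 0) ↔ M.map (starRingEnd ℂ) = M := by
  constructor
  · intro h; ext a b
    simp [Matrix.map_apply, Complex.conj_eq_iff_im.mpr (h a b)]
  · intro h a b
    have := congrFun (congrFun h a) b
    simpa [Matrix.map_apply, Complex.conj_eq_iff_im] using this

lemma doubledUp_iff_real (T : Matrix (Fin k ⊕ Fin k) (Fin k ⊕ Fin k) ℂ) :
    DoubledUp T ↔ ∀ a b, ((Phi k * T * (Phi k)ᴴ) a b).im = 0 := by
  rw [real_iff]
  have hmap : (Phi k * T * (Phi k)ᴴ).map (starRingEnd ℂ)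
      = Phi k * (Sig k * T.map (starRingEnd ℂ) * Sig k) * (Phi k)ᴴ := by
    rw [Matrix.map_mul (f := starRingEnd ℂ), Matrix.map_mul (f := starRingEnd ℂ),
      mapPhi, mapPhiH]
    simp only [Matrix.mul_assoc]
  rw [hmap]
  constructor
  · intro h
    have hT : Sig k * T.map (starRingEnd ℂ) * Sig k = T := by
      rw [← h]
      simp [Matrix.mul_assoc, sig_sig_assoc, sig_sq, Matrix.mul_one]
    rw [hT]
  · intro h
    have hT : Sig k * T.map (starRingEnd ℂ) * Sig k = T := conj_cancel h
    unfold DoubledUp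
    calc Sig k * T * Sig k
        = Sig k * (Sig k * T.map (starRingEnd ℂ) * Sig k) * Sig k := by rw [hT]
      _ = T.map (starRingEnd ℂ) := by
          simp [Matrix.mul_assoc, sig_sig_assoc, sig_sq, Matrix.mul_one]

lemma J_phi : Jsymp k * Phi k = Phi k * ((-Complex.I) • Jmat k) := by
  simp only [Phi, Jsymp, Jmat, Matrix.smul_mul, Matrix.mul_smul, smul_smul,
    Matrix.fromBlocks_multiply, Matrix.fromBlocks_smul, Matrix.mul_one, Matrix.one_mul,
    Matrix.mul_zero, Matrix.zero_mul, Matrix.mul_neg, Matrix.neg_mul, add_zero, zero_add,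
    neg_smul, smul_neg, neg_neg, Complex.I_mul_I, neg_mul, mul_neg, one_smul, smul_zero,
    neg_zero]
  simp only [Matrix.fromBlocks_neg, neg_neg, mul_left_comm, mul_comm, Complex.I_mul_I,
    neg_smul, mul_neg, mul_one, neg_neg, smul_neg]
  simp only [← mul_assoc, Complex.I_mul_I, neg_mul, one_mul, neg_smul, neg_neg]

lemma J_phi_assoc (M : Matrix (Fin k ⊕ Fin k) (Fin k ⊕ Fin k) ℂ) :
    Jsymp k * (Phi k * M) = Phi k * ((-Complex.I) • (Jmat k * M)) := by
  rw [← Matrix.mul_assoc, J_phi, Matrix.mul_assoc, Matrix.smul_mul, Matrix.mul_smul]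

lemma jsymp_decomp : Jsymp k = Phi k * ((-Complex.I) • Jmat k) * (Phi k)ᴴ := by
  have h2 := congrArg (fun M => M * (Phi k)ᴴ) (J_phi (k := k))
  simpa [Matrix.mul_assoc, phi_phiH, Matrix.mul_one] using h2

lemma left_cancel_phi {A B : Matrix (Fin k ⊕ Fin k) (Fin k ⊕ Fin k) ℂ}
    (h : Phi k * A = Phi k * B) : A = B := by
  have h2 := congrArg (fun M => (Phi k)ᴴ * M) h
  simpa [phiH_phi_assoc] using h2

lemma symp_core (T : Matrix (Fin k ⊕ Fin k) (Fin k ⊕ Fin k) ℂ) :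
    (Phi k * T * (Phi k)ᴴ)ᴴ * Jsymp k * (Phi k * T * (Phi k)ᴴ) = Jsymp k ↔
      Tᴴ * Jmat k * T = Jmat k := by
  have hL : (Phi k * T * (Phi k)ᴴ)ᴴ * Jsymp k * (Phi k * T * (Phi k)ᴴ)
      = Phi k * ((-Complex.I) • (Tᴴ * Jmat k * T)) * (Phi k)ᴴ := by
    simp only [Matrix.conjTranspose_mul, Matrix.conjTranspose_conjTranspose,
      Matrix.mul_assoc, J_phi_assoc, phiH_phi_assoc, Matrix.mul_smul, Matrix.smul_mul]
  rw [hL]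
  constructor
  · intro h
    rw [jsymp_decomp] at h
    exact smul_right_injective _ (by simp [Complex.ext_iff] : (-Complex.I) ≠ 0)
      (conj_cancel h)
  · intro h
    rw [h, ← jsymp_decomp]

lemma flat_iff (T : Matrix (Fin k ⊕ Fin k) (Fin k ⊕ Fin k) ℂ) :
    flatAdj T * T = 1 ↔ Tᴴ * Jmat k * T = Jmat k := by
  unfold flatAdj
  constructor
  · intro h
    have h2 := congrArg (fun M => Jmat k * M) h
    simpa [Matrix.mul_assoc, jmat_jmat_assoc, Matrix.mul_one] using h2
  · intro h
    have h2 := congrArg (fun M => Jmat k * M) h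
    simpa [Matrix.mul_assoc, jmat_jmat_assoc, jmat_sq] using h2

lemma transpose_eq_of_real (M : Matrix (Fin k ⊕ Fin k) (Fin k ⊕ Fin k) ℂ)
    (h : ∀ a b, (M a b).im = 0) : Mᵀ = Mᴴ := by
  ext a b
  simp only [Matrix.transpose_apply, Matrix.conjTranspose_apply, RCLike.star_def]
  exact (Complex.conj_eq_iff_im.mpr (h b a)).symm

end BogoAux

open BogoAux

/-- `T` is Bogoliubov iff `S = Φ T Φ⁻¹` is real symplectic (real entries and
`Sᵀ 𝕁 S = 𝕁`); moreover `T ↦ Φ T Φ⁻¹` is multiplicative, injective, and onto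
the real symplectic matrices, hence a group isomorphism from the Bogoliubov
group onto the real symplectic group. -/
theorem bogoliubov_symplectic_isomorphism (k : ℕ) :
    (∀ T : Matrix (Fin k ⊕ Fin k) (Fin k ⊕ Fin k) ℂ,
      Bogoliubov T ↔
        ((∀ a b, ((Phi k * T * (Phi k)⁻¹) a b).im = 0) ∧
          (Phi k * T * (Phi k)⁻¹)ᵀ * Jsymp k * (Phi k * T * (Phi k)⁻¹) = Jsymp k)) ∧
    (∀ T₁ T₂ : Matrix (Fin k ⊕ Fin k) (Fin k ⊕ Fin k) ℂ,
      Phi k * (T₁ * T₂) * (Phi k)⁻¹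
        = (Phi k * T₁ * (Phi k)⁻¹) * (Phi k * T₂ * (Phi k)⁻¹)) ∧
    (∀ T₁ T₂ : Matrix (Fin k ⊕ Fin k) (Fin k ⊕ Fin k) ℂ,
      Bogoliubov T₁ → Bogoliubov T₂ →
      Phi k * T₁ * (Phi k)⁻¹ = Phi k * T₂ * (Phi k)⁻¹ → T₁ = T₂) ∧
    (∀ S : Matrix (Fin k ⊕ Fin k) (Fin k ⊕ Fin k) ℂ,
      (∀ a b, (S a b).im = 0) → Sᵀ * Jsymp k * S = Jsymp k →
      ∃ T, Bogoliubov T ∧ Phi k * T * (Phi k)⁻¹ = S) := by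
  have hiff : ∀ T : Matrix (Fin k ⊕ Fin k) (Fin k ⊕ Fin k) ℂ,
      Bogoliubov T ↔
        ((∀ a b, ((Phi k * T * (Phi k)⁻¹) a b).im = 0) ∧
          (Phi k * T * (Phi k)⁻¹)ᵀ * Jsymp k * (Phi k * T * (Phi k)⁻¹) = Jsymp k) := by
    intro T
    rw [phi_inv]
    constructor
    · rintro ⟨hd, h1, h2⟩
      have hre := (doubledUp_iff_real T).mp hd
      refine ⟨hre, ?_⟩
      rw [transpose_eq_of_real _ hre]
      exact (symp_core T).mpr ((flat_iff T).mp h2)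
    · rintro ⟨hre, hs⟩
      have hd := (doubledUp_iff_real T).mpr hre
      rw [transpose_eq_of_real _ hre] at hs
      have h2 := (flat_iff T).mpr ((symp_core T).mp hs)
      exact ⟨hd, mul_eq_one_comm.mpr h2, h2⟩
  refine ⟨hiff, ?_, ?_, ?_⟩
  · intro T₁ T₂
    rw [phi_inv]
    simp only [Matrix.mul_assoc, phiH_phi_assoc]
  · intro T₁ T₂ _ _ h
    rw [phi_inv] at h
    exact conj_cancel h
  · intro S hre hs
    have hc : Phi k * ((Phi k)ᴴ * S * Phi k) * (Phi k)⁻¹ = S := by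
      rw [phi_inv]
      simp only [Matrix.mul_assoc, phi_phiH_assoc, phi_phiH, Matrix.mul_one]
    exact ⟨(Phi k)ᴴ * S * Phi k, (hiff _).mpr (by rw [hc]; exact ⟨hre, hs⟩), hc⟩
end
end

section
/- Let λ = μ + iν be a complex number with ν > 0, and set α = √((|λ| + μ)/2) and β = ν/√(2(|λ| + μ)). Let σ₂ = [[0, −i],[i, 0]] and let N̄ be the 4×4 complex matrix N̄ = [[α·I₂, −β·σ₂],[β·σ₂, α·I₂]]. Then N̄ is doubled-up and N̄^♭·N̄ = [[μ·I₂, −ν·σ₂],[ν·σ₂, μ·I₂]]. Moreover, for λ > 0 real, the matrix diag(√λ, √λ) = [[√λ, 0],[0, √λ]] satisfies ([[√λ, 0],[0, √λ]])^♭·[[√λ, 0],[0, √λ]] = λ·I₂, and for λ < 0 real, the matrix [[0, √|λ|],[√|λ|, 0]] satisfies ([[0, √|λ|],[√|λ|, 0]])^♭·[[0, √|λ|],[√|λ|, 0]] = λ·I₂. -/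
open Matrix

noncomputable section

/-- The Pauli matrix `σ₂`. -/
def sigma2 : Matrix (Fin 2) (Fin 2) ℂ := !![0, -Complex.I; Complex.I, 0]

section helpers

lemma flatAdj_fromBlocks {r s : ℕ} (A : Matrix (Fin r) (Fin s) ℂ)
    (B : Matrix (Fin r) (Fin s) ℂ) (C : Matrix (Fin r) (Fin s) ℂ)
    (D : Matrix (Fin r) (Fin s) ℂ) :
    flatAdj (Matrix.fromBlocks A B C D) =
      Matrix.fromBlocks Aᴴ (-Cᴴ) (-Bᴴ) Dᴴ := by
  simp [flatAdj, Jmat, Matrix.fromBlocks_conjTranspose, Matrix.fromBlocks_multiply]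

lemma sigma2_conjTranspose : sigma2ᴴ = sigma2 := by
  ext i j; fin_cases i <;> fin_cases j <;>
    simp [sigma2, Matrix.conjTranspose_apply]

lemma sigma2_sq : sigma2 * sigma2 = 1 := by
  ext i j; fin_cases i <;> fin_cases j <;>
    simp [sigma2, Matrix.mul_apply, Fin.sum_univ_two, Complex.I_mul_I]

lemma sigma2_map_conj : sigma2.map (starRingEnd ℂ) = -sigma2 := by
  ext i j; fin_cases i <;> fin_cases j <;> simp [sigma2]

end helpers

/-- The canonical coupling blocks of the doubled-up SVD: for a non-real
eigenvalue `λ = μ + iν` (`ν > 0`), the doubled-up matrix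
`N̄ = [[αI₂, −βσ₂],[βσ₂, αI₂]]` satisfies `N̄^♭N̄ = [[μI₂, −νσ₂],[νσ₂, μI₂]]`;
for real `λ > 0`, `diag(√λ, √λ)` satisfies `(·)^♭(·) = λI₂`; for real
`λ < 0`, `[[0, √|λ|],[√|λ|, 0]]` satisfies `(·)^♭(·) = λI₂`. -/


theorem canonical_coupling_blocks (μ ν : ℝ) (hν : 0 < ν) (lam : ℂ)
    (hlam : lam = Complex.mk μ ν) (α β : ℝ)
    (hα : α = Real.sqrt ((‖lam‖ + μ) / 2))
    (hβ : β = ν / Real.sqrt (2 * (‖lam‖ + μ))) :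
    (DoubledUp (Matrix.fromBlocks ((α : ℂ) • (1 : Matrix (Fin 2) (Fin 2) ℂ))
        ((-(β : ℂ)) • sigma2) ((β : ℂ) • sigma2)
        ((α : ℂ) • (1 : Matrix (Fin 2) (Fin 2) ℂ))) ∧
      flatAdj (Matrix.fromBlocks ((α : ℂ) • (1 : Matrix (Fin 2) (Fin 2) ℂ))
            ((-(β : ℂ)) • sigma2) ((β : ℂ) • sigma2)
            ((α : ℂ) • (1 : Matrix (Fin 2) (Fin 2) ℂ)))
          * Matrix.fromBlocks ((α : ℂ) • (1 : Matrix (Fin 2) (Fin 2) ℂ))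
            ((-(β : ℂ)) • sigma2) ((β : ℂ) • sigma2)
            ((α : ℂ) • (1 : Matrix (Fin 2) (Fin 2) ℂ))
        = Matrix.fromBlocks ((μ : ℂ) • (1 : Matrix (Fin 2) (Fin 2) ℂ))
            ((-(ν : ℂ)) • sigma2) ((ν : ℂ) • sigma2)
            ((μ : ℂ) • (1 : Matrix (Fin 2) (Fin 2) ℂ))) ∧
    (∀ t : ℝ, 0 < t →
      flatAdj (Matrix.fromBlocks
            ((Real.sqrt t : ℂ) • (1 : Matrix (Fin 1) (Fin 1) ℂ)) 0 0
            ((Real.sqrt t : ℂ) • (1 : Matrix (Fin 1) (Fin 1) ℂ)))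
          * Matrix.fromBlocks
            ((Real.sqrt t : ℂ) • (1 : Matrix (Fin 1) (Fin 1) ℂ)) 0 0
            ((Real.sqrt t : ℂ) • (1 : Matrix (Fin 1) (Fin 1) ℂ))
        = (t : ℂ) • (1 : Matrix (Fin 1 ⊕ Fin 1) (Fin 1 ⊕ Fin 1) ℂ)) ∧
    (∀ t : ℝ, t < 0 →
      flatAdj (Matrix.fromBlocks 0
            ((Real.sqrt |t| : ℂ) • (1 : Matrix (Fin 1) (Fin 1) ℂ))
            ((Real.sqrt |t| : ℂ) • (1 : Matrix (Fin 1) (Fin 1) ℂ)) 0)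
          * Matrix.fromBlocks 0
            ((Real.sqrt |t| : ℂ) • (1 : Matrix (Fin 1) (Fin 1) ℂ))
            ((Real.sqrt |t| : ℂ) • (1 : Matrix (Fin 1) (Fin 1) ℂ)) 0
        = (t : ℂ) • (1 : Matrix (Fin 1 ⊕ Fin 1) (Fin 1 ⊕ Fin 1) ℂ)) := by

  subst hlam
  set a : ℝ := ‖Complex.mk μ ν‖ with ha
  have ha0 : 0 ≤ a := norm_nonneg _
  have hasq : a ^ 2 = μ ^ 2 + ν ^ 2 := by
    rw [ha, Complex.sq_norm, Complex.normSq_mk]; ring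
  have haμ : 0 < a + μ := by nlinarith [sq_nonneg ν, mul_pos hν hν]
  have hx : (0:ℝ) < (a + μ) / 2 := by linarith
  have hα0 : 0 ≤ α := hα ▸ Real.sqrt_nonneg _
  have hα2 : α ^ 2 = (a + μ) / 2 := by rw [hα]; exact Real.sq_sqrt (le_of_lt hx)
  have hs4 : Real.sqrt (2 * (a + μ)) = 2 * Real.sqrt ((a + μ) / 2) := by
    rw [show 2 * (a + μ) = 2 ^ 2 * ((a + μ) / 2) by ring,
      Real.sqrt_mul (by positivity), Real.sqrt_sq (by norm_num)]
  have hsx : Real.sqrt ((a + μ) / 2) ≠ 0 := by positivity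
  have hαβ : 2 * (α * β) = ν := by
    rw [hα, hβ, hs4]; field_simp
  have hβ2 : β ^ 2 = (a - μ) / 2 := by
    have h2 : Real.sqrt (2 * (a + μ)) ^ 2 = 2 * (a + μ) :=
      Real.sq_sqrt (by linarith)
    have hne : Real.sqrt (2 * (a + μ)) ≠ 0 := by positivity
    rw [hβ, div_pow, h2]
    field_simp
    nlinarith [hasq]
  have hC1 : ((μ:ℂ)) = (α:ℂ) * (α:ℂ) - (β:ℂ) * (β:ℂ) := by
    have : μ = α * α - β * β := by nlinarith [hα2, hβ2]
    rw [this]; push_cast; ring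
  have hC2 : ((ν:ℂ)) = 2 * ((α:ℂ) * (β:ℂ)) := by
    rw [← hαβ]; push_cast; ring
  have hmap1 : (((α:ℂ)) • (1 : Matrix (Fin 2) (Fin 2) ℂ)).map (starRingEnd ℂ)
      = ((α:ℂ)) • (1 : Matrix (Fin 2) (Fin 2) ℂ) := by
    ext i j; by_cases h : i = j <;> simp [Matrix.one_apply, h]
  have hct1 : (((α:ℂ)) • (1 : Matrix (Fin 2) (Fin 2) ℂ))ᴴ
      = ((α:ℂ)) • (1 : Matrix (Fin 2) (Fin 2) ℂ) := by
    simp [Matrix.conjTranspose_smul]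
  have hctσ : ∀ c : ℝ, (((c:ℂ)) • sigma2)ᴴ = ((c:ℂ)) • sigma2 := by
    intro c
    simp [Matrix.conjTranspose_smul, sigma2_conjTranspose]
  refine ⟨⟨?_, ?_⟩, ?_, ?_⟩
  have hmσ : (((β:ℂ)) • sigma2).map (starRingEnd ℂ) = (-(β:ℂ)) • sigma2 := by
    ext i j; fin_cases i <;> fin_cases j <;> simp [sigma2]
  have hmσn : ((-(β:ℂ)) • sigma2).map (starRingEnd ℂ) = ((β:ℂ)) • sigma2 := by
    ext i j; fin_cases i <;> fin_cases j <;> simp [sigma2]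
  · -- DoubledUp
    show Sig 2 * _ * Sig 2 = _
    simp only [Sig, Matrix.fromBlocks_multiply, Matrix.one_mul, Matrix.mul_one,
      Matrix.zero_mul, Matrix.mul_zero, zero_add, add_zero,
      Matrix.fromBlocks_map, hmap1, hmσ, hmσn]
  · -- N̄^♭ N̄
    have hflat : flatAdj (Matrix.fromBlocks ((α:ℂ) • (1 : Matrix (Fin 2) (Fin 2) ℂ))
          ((-(β:ℂ)) • sigma2) ((β:ℂ) • sigma2)
          ((α:ℂ) • (1 : Matrix (Fin 2) (Fin 2) ℂ)))
        = Matrix.fromBlocks ((α:ℂ) • (1 : Matrix (Fin 2) (Fin 2) ℂ))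
          ((-(β:ℂ)) • sigma2) ((β:ℂ) • sigma2)
          ((α:ℂ) • (1 : Matrix (Fin 2) (Fin 2) ℂ)) := by
      rw [flatAdj_fromBlocks]
      simp [Matrix.conjTranspose_smul, sigma2_conjTranspose,
        Complex.conj_ofReal, neg_smul]
    rw [hflat, Matrix.fromBlocks_multiply, Matrix.fromBlocks_inj]
    refine ⟨?_, ?_, ?_, ?_⟩ <;>
      simp only [Matrix.smul_mul, Matrix.mul_smul, Matrix.one_mul,
        Matrix.mul_one, sigma2_sq, smul_smul, ← add_smul] <;>
      congr 1 <;>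
      first
        | linear_combination hC1
        | linear_combination (-1 : ℂ) * hC1
        | linear_combination hC2
        | linear_combination (-1 : ℂ) * hC2
  · -- positive real case
    intro t ht
    have hst : (Real.sqrt t : ℂ) * (Real.sqrt t : ℂ) = (t : ℂ) := by
      have h : Real.sqrt t * Real.sqrt t = t := Real.mul_self_sqrt ht.le
      exact_mod_cast congrArg (Complex.ofReal) h
    have hct : ((Real.sqrt t : ℂ) • (1 : Matrix (Fin 1) (Fin 1) ℂ))ᴴ
        = (Real.sqrt t : ℂ) • (1 : Matrix (Fin 1) (Fin 1) ℂ) := by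
      simp [Matrix.conjTranspose_smul, Complex.conj_ofReal]
    have hrhs : (t : ℂ) • (1 : Matrix (Fin 1 ⊕ Fin 1) (Fin 1 ⊕ Fin 1) ℂ)
        = Matrix.fromBlocks ((t:ℂ) • 1) 0 0 ((t:ℂ) • 1) := by
      rw [← Matrix.fromBlocks_one, Matrix.fromBlocks_smul, smul_zero]
    rw [flatAdj_fromBlocks, hct, Matrix.fromBlocks_multiply, hrhs]
    simp only [Matrix.conjTranspose_zero, neg_zero, Matrix.zero_mul,
      Matrix.mul_zero, add_zero, zero_add, Matrix.smul_mul, Matrix.mul_smul,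
      Matrix.one_mul, smul_smul, hst, smul_zero]
  · -- negative real case
    intro t ht
    have hst : (Real.sqrt |t| : ℂ) * (Real.sqrt |t| : ℂ) = -(t : ℂ) := by
      have h : Real.sqrt |t| * Real.sqrt |t| = -t := by
        rw [Real.mul_self_sqrt (abs_nonneg t), abs_of_neg ht]
      rw [show -(t:ℂ) = ((-t : ℝ) : ℂ) by push_cast; ring]
      exact_mod_cast congrArg (Complex.ofReal) h
    have hct : ((Real.sqrt |t| : ℂ) • (1 : Matrix (Fin 1) (Fin 1) ℂ))ᴴ
        = (Real.sqrt |t| : ℂ) • (1 : Matrix (Fin 1) (Fin 1) ℂ) := by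
      simp [Matrix.conjTranspose_smul, Complex.conj_ofReal]
    have hrhs : (t : ℂ) • (1 : Matrix (Fin 1 ⊕ Fin 1) (Fin 1 ⊕ Fin 1) ℂ)
        = Matrix.fromBlocks ((t:ℂ) • 1) 0 0 ((t:ℂ) • 1) := by
      rw [← Matrix.fromBlocks_one, Matrix.fromBlocks_smul, smul_zero]
    rw [flatAdj_fromBlocks, hct, Matrix.fromBlocks_multiply, hrhs]
    simp only [Matrix.conjTranspose_zero, Matrix.zero_mul,
      Matrix.mul_zero, add_zero, zero_add, Matrix.neg_mul, Matrix.mul_neg,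
      Matrix.smul_mul, Matrix.mul_smul, Matrix.one_mul, smul_smul, hst,
      neg_smul, smul_neg, neg_neg, neg_zero, smul_zero]
end
end

section
/- Let λ ∈ ℝ with λ > −1/2, set c = √(λ + 1/2), and let x ∈ ℝ satisfy sinh(2x) = 1/(2c²). Let N̄ be the 4×4 real matrix with rows (c·cosh x, sinh x, 0, −c·sinh x), (0, c·cosh x, c·sinh x, cosh x), (0, −c·sinh x, c·cosh x, sinh x), (c·sinh x, cosh x, 0, c·cosh x). Then N̄ is doubled-up and N̄^♭·N̄ = 𝒩̄, where 𝒩̄ is the 4×4 matrix with rows (λ + 1/2, 0, 0, −1/2), (0, λ − 1/2, 1/2, 0), (0, −1/2, λ + 1/2, 0), (1/2, 0, 0, λ − 1/2). Moreover, 𝒩̄ = 𝒯₄^{-1}·diag(𝐣₂(λ), 𝐣₂(λ))·𝒯₄, where 𝐣₂(λ) = [[λ, 1],[0, λ]] is the 2×2 upper Jordan block with eigenvalue λ and 𝒯₄ = (1/√2)·[[1, 0, 0, 1],[1, 0, 0, −1],[0, 1, 1, 0],[0, −1, 1, 0]]. -/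
open Matrix

noncomputable section
set_option maxHeartbeats 1000000

/-- Canonical coupling block for a real eigenvalue `λ > −1/2` of `N^♭N` with a
Jordan block of size 2: with `c = √(λ + 1/2)` and `sinh(2x) = 1/(2c²)`, the
explicit `4 × 4` matrix `N̄` is doubled-up and satisfies `N̄^♭N̄ = 𝒩̄`, where
`𝒩̄` is similar, via `𝒯₄`, to `diag(𝐣₂(λ), 𝐣₂(λ))`. -/
theorem jordan_block_two_coupling (lam : ℝ) (hlam : -(1 / 2 : ℝ) < lam)
    (c x : ℝ) (hc : c = Real.sqrt (lam + 1 / 2))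
    (hx : Real.sinh (2 * x) = 1 / (2 * c ^ 2))
    (Nbar Ncal : Matrix (Fin 2 ⊕ Fin 2) (Fin 2 ⊕ Fin 2) ℂ)
    (T4 : Matrix (Fin 2 ⊕ Fin 2) (Fin 2 ⊕ Fin 2) ℂ)
    (hNbar : Nbar =
      (Matrix.fromBlocks
        !![c * Real.cosh x, Real.sinh x; 0, c * Real.cosh x]
        !![0, -(c * Real.sinh x); c * Real.sinh x, Real.cosh x]
        !![0, -(c * Real.sinh x); c * Real.sinh x, Real.cosh x]
        !![c * Real.cosh x, Real.sinh x; 0, c * Real.cosh x]).map (fun t => (t : ℂ)))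
    (hNcal : Ncal =
      (Matrix.fromBlocks
        !![lam + 1 / 2, 0; 0, lam - 1 / 2]
        !![0, -(1 / 2 : ℝ); 1 / 2, 0]
        !![0, -(1 / 2 : ℝ); 1 / 2, 0]
        !![lam + 1 / 2, 0; 0, lam - 1 / 2]).map (fun t => (t : ℂ)))
    (hT4 : T4 = ((Real.sqrt 2 : ℂ))⁻¹ •
      (Matrix.fromBlocks
        !![(1 : ℝ), 0; 1, 0] !![(0 : ℝ), 1; 0, -1]
        !![(0 : ℝ), 1; 0, -1] !![(1 : ℝ), 0; 1, 0]).map (fun t => (t : ℂ))) :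
    DoubledUp Nbar ∧
    flatAdj Nbar * Nbar = Ncal ∧
    Ncal = T4⁻¹ *
        ((Matrix.fromBlocks !![lam, 1; 0, lam] 0 0 !![lam, 1; 0, lam]).map
          (fun t => (t : ℂ))) * T4 := by
  have hpos : (0:ℝ) < lam + 1 / 2 := by linarith
  have hc2 : c ^ 2 = lam + 1 / 2 := by rw [hc, Real.sq_sqrt hpos.le]
  have hc2ne : c ^ 2 ≠ 0 := by rw [hc2]; positivity
  have h1 : Real.cosh x ^ 2 - Real.sinh x ^ 2 = 1 := Real.cosh_sq_sub_sinh_sq x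
  have hsc : 4 * c ^ 2 * (Real.sinh x * Real.cosh x) = 1 := by
    rw [Real.sinh_two_mul] at hx
    field_simp at hx
    rw [eq_div_iff hc2ne] at hx
    linear_combination hx
  obtain ⟨s, ch, hs, hch⟩ : ∃ s ch, Real.sinh x = s ∧ Real.cosh x = ch := ⟨_, _, rfl, rfl⟩
  rw [hs, hch] at hNbar h1 hsc
  have h1c : (ch:ℂ)^2 - (s:ℂ)^2 = 1 := by exact_mod_cast congrArg (fun t : ℝ => (t:ℂ)) h1
  have hscc : 4 * (c:ℂ)^2 * ((s:ℂ) * (ch:ℂ)) = 1 := by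
    exact_mod_cast congrArg (fun t : ℝ => (t:ℂ)) hsc
  have hc2c : (c:ℂ)^2 = (lam:ℂ) + 1/2 := by
    rw [show ((lam:ℂ) + 1/2) = ((lam + 1/2 : ℝ) : ℂ) by push_cast; ring]
    exact_mod_cast congrArg (fun t : ℝ => (t:ℂ)) hc2
  subst hNbar hNcal
  refine ⟨?_, ?_, ?_⟩
  · unfold DoubledUp Sig
    ext (i|i) (j|j) <;> fin_cases i <;> fin_cases j <;>
      simp [Matrix.mul_apply, Fintype.sum_sum_type, Fin.sum_univ_two, Matrix.one_apply,
        Complex.conj_ofReal]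
  · unfold flatAdj Jmat
    ext (i|i) (j|j) <;> fin_cases i <;> fin_cases j <;>
      simp [Matrix.mul_apply, Fintype.sum_sum_type, Fin.sum_univ_two, Matrix.one_apply,
        Complex.conj_ofReal, Matrix.conjTranspose_apply] <;>
      push_cast <;>
      first
        | ring1
        | linear_combination ((c:ℂ)^2) * h1c + hc2c
        | linear_combination ((c:ℂ)^2 - 1) * h1c + hc2c
        | linear_combination (1/8 : ℂ) * hscc
        | linear_combination (-(1/8) : ℂ) * hscc
        | linear_combination (1/2 : ℂ) * hscc
        | linear_combination (-(1/2) : ℂ) * hscc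
  · set M : Matrix (Fin 2 ⊕ Fin 2) (Fin 2 ⊕ Fin 2) ℂ :=
      (Matrix.fromBlocks
          !![(1 : ℝ), 0; 1, 0] !![(0 : ℝ), 1; 0, -1]
          !![(0 : ℝ), 1; 0, -1] !![(1 : ℝ), 0; 1, 0]).map (fun t => (t : ℂ)) with hM
    set r : ℂ := ((Real.sqrt 2 : ℝ) : ℂ) with hr
    have hs2 : r * r = 2 := by
      rw [hr, ← Complex.ofReal_mul, Real.mul_self_sqrt (by norm_num)]; norm_num
    have hinv2 : r⁻¹ * r⁻¹ = (2 : ℂ)⁻¹ := by rw [← mul_inv, hs2]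
    have hMMt : M * Mᵀ = (2 : ℂ) • 1 := by
      ext (i|i) (j|j) <;> fin_cases i <;> fin_cases j <;>
        simp [hM, Matrix.mul_apply, Fintype.sum_sum_type, Fin.sum_univ_two, Matrix.one_apply,
          Matrix.transpose_apply] <;> norm_num
    have hright : T4 * (r⁻¹ • Mᵀ) = 1 := by
      rw [hT4, Matrix.smul_mul, Matrix.mul_smul, smul_smul, hinv2, hMMt, smul_smul]
      norm_num
    rw [Matrix.inv_eq_right_inv hright, hT4, Matrix.smul_mul, Matrix.smul_mul,
      Matrix.mul_smul, smul_smul, hinv2]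
    ext (i|i) (j|j) <;> fin_cases i <;> fin_cases j <;>
      simp [hM, Matrix.mul_apply, Fintype.sum_sum_type, Fin.sum_univ_two,
        Matrix.transpose_apply, Matrix.smul_apply] <;> push_cast <;> ring1
end
end
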